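/- arXiv:1812.04930 — 5 statements merged into one kernel-verified Lean document; each statement's English description precedes it below -/
import Mathlib

section
/- Let ι be a finite type and let V be a ℚ-linear subspace of (ι → ℚ). Then V is spanned by its minimally supported vectors; that is, V equals the ℚ-span of the set of vectors v ∈ V such that v ≠ 0 and there is no nonzero w ∈ V whose support is strictly contained in the support of v. (For V = Z_i(X) this says that the set of i-minimal cycles generates the cycle space.) -/
/-- A subspace `V` of `ι → ℚ` (`ι` finite) is spanned by its minimally supported
vectors: the nonzero `v ∈ V` such that no nonzero `w ∈ V` has support strictly
contained in the support of `v`. -/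
theorem span_minimally_supported (ι : Type*) [Fintype ι] (V : Submodule ℚ (ι → ℚ)) :
    V = Submodule.span ℚ {v : ι → ℚ | v ∈ V ∧ v ≠ 0 ∧
      ¬ ∃ w ∈ V, w ≠ 0 ∧ Function.support w ⊂ Function.support v} := by
  set S : Set (ι → ℚ) := {v : ι → ℚ | v ∈ V ∧ v ≠ 0 ∧
      ¬ ∃ w ∈ V, w ≠ 0 ∧ Function.support w ⊂ Function.support v} with hSdef
  refine le_antisymm ?_ (Submodule.span_le.mpr fun v hv => hv.1)
  intro v hv
  generalize hn : (Function.support v).ncard = n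
  induction n using Nat.strong_induction_on generalizing v with
  | _ n ih =>
    by_cases h0 : v = 0
    · simp [h0]
    by_cases hmin : ∃ w ∈ V, w ≠ 0 ∧ Function.support w ⊂ Function.support v
    · obtain ⟨w, hwV, hw0, hsub⟩ := hmin
      obtain ⟨i, hi⟩ := Function.ne_iff.mp hw0
      have hi' : w i ≠ 0 := by simpa using hi
      set c : ℚ := v i / w i with hc
      have hviV : v - c • w ∈ V := V.sub_mem hv (V.smul_mem c hwV)
      have hsupp : Function.support (v - c • w) ⊂ Function.support v := by
        constructor
        · intro j hj
          simp only [Function.mem_support, Pi.sub_apply, Pi.smul_apply,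
            smul_eq_mul] at hj ⊢
          intro hvj
          have hwj : w j = 0 := by
            by_contra hwj
            exact (Function.mem_support.mp (hsub.1 hwj)) hvj |>.elim
          simp [hvj, hwj] at hj
        · intro hsub2
          have hiv : i ∈ Function.support v := hsub.1 hi
          have : (v - c • w) i = 0 := by
            simp [hc, hi']
          exact (Function.mem_support.mp (hsub2 hiv)) this
      have hcard1 : (Function.support (v - c • w)).ncard < n := by
        rw [← hn]
        exact Set.ncard_lt_ncard hsupp (Set.toFinite _)
      have hcard2 : (Function.support w).ncard < n := by
        rw [← hn]
        exact Set.ncard_lt_ncard hsub (Set.toFinite _)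
      have h1 := ih _ hcard1 hviV rfl
      have h2 := ih _ hcard2 hwV rfl
      have : v = (v - c • w) + c • w := by ring
      rw [this]
      exact Submodule.add_mem _ h1 (Submodule.smul_mem _ c h2)
    · exact Submodule.subset_span ⟨hv, h0, hmin⟩
end

section
/- Let ι be a finite type and let W ⊆ V be ℚ-linear subspaces of (ι → ℚ) with finrank V ≤ finrank W + 1. Then every minimally supported vector of W is either a minimally supported vector of V, or is the sum of two minimally supported vectors of V. (Applied with W = B_i(X;ℚ) the boundary space and V = Z_i(X;ℚ) the cycle space of a complex with rk H̃_i(X) = 1, this says that a minimal boundary is either a minimal cycle or the sum of two minimal cycles.) -/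
/-- `v` is a minimally supported vector of the subspace `V ≤ (ι → ℚ)`:
`v` is a nonzero element of `V` and no nonzero element of `V` has support
strictly contained in the support of `v`. -/
def MinSupp {ι : Type*} (V : Submodule ℚ (ι → ℚ)) (v : ι → ℚ) : Prop :=
  v ∈ V ∧ v ≠ 0 ∧ ¬ ∃ w ∈ V, w ≠ 0 ∧ Function.support w ⊂ Function.support v

/-- The submodule of functions supported inside `S`. -/
def suppSub {ι : Type*} (S : Set ι) : Submodule ℚ (ι → ℚ) where
  carrier := {u | ∀ i, i ∉ S → u i = 0}
  add_mem' := by intro a b ha hb i hi; simp [ha i hi, hb i hi]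
  zero_mem' := by intro i hi; rfl
  smul_mem' := by intro c a ha i hi; simp [ha i hi]

lemma mem_suppSub {ι : Type*} {S : Set ι} {u : ι → ℚ} :
    u ∈ suppSub S ↔ Function.support u ⊆ S := by
  rw [Function.support_subset_iff']
  exact Iff.rfl

lemma exists_minSupp_aux {ι : Type*} [Fintype ι] (V : Submodule ℚ (ι → ℚ)) :
    ∀ n (w : ι → ℚ), (Function.support w).ncard ≤ n → w ∈ V → w ≠ 0 →
      ∃ x, MinSupp V x ∧ Function.support x ⊆ Function.support w := by
  intro n
  induction n with
  | zero =>
    intro w hc hw h0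
    exfalso
    apply h0
    rw [← Function.support_eq_empty_iff]
    exact (Set.ncard_eq_zero (Set.toFinite _)).mp (Nat.le_zero.mp hc)
  | succ n ih =>
    intro w hc hw h0
    by_cases h : ∃ u ∈ V, u ≠ 0 ∧ Function.support u ⊂ Function.support w
    · obtain ⟨u, huV, hu0, hus⟩ := h
      have hcard : (Function.support u).ncard ≤ n := by
        have := Set.ncard_lt_ncard hus (Set.toFinite _)
        omega
      obtain ⟨x, hx, hxs⟩ := ih u hcard huV hu0
      exact ⟨x, hx, hxs.trans hus.subset⟩
    · exact ⟨w, ⟨hw, h0, h⟩, subset_rfl⟩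

lemma exists_minSupp {ι : Type*} [Fintype ι] (V : Submodule ℚ (ι → ℚ))
    (w : ι → ℚ) (hw : w ∈ V) (h0 : w ≠ 0) :
    ∃ x, MinSupp V x ∧ Function.support x ⊆ Function.support w :=
  exists_minSupp_aux V (Function.support w).ncard w le_rfl hw h0

/-- If `W ⊆ V` are subspaces of `ι → ℚ` (`ι` finite) with `finrank V ≤ finrank W + 1`,
then every minimally supported vector of `W` is either a minimally supported vector
of `V` or the sum of two minimally supported vectors of `V`. -/
theorem minSupp_sub_eq_or_sum_two (ι : Type*) [Fintype ι]
    (W V : Submodule ℚ (ι → ℚ)) (hWV : W ≤ V)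
    (hrank : Module.finrank ℚ V ≤ Module.finrank ℚ W + 1)
    (v : ι → ℚ) (hv : MinSupp W v) :
    MinSupp V v ∨ ∃ x y : ι → ℚ, MinSupp V x ∧ MinSupp V y ∧ v = x + y := by
  classical
  by_cases hminV : MinSupp V v
  · exact Or.inl hminV
  right
  have hvV : v ∈ V := hWV hv.1
  have hv0 : v ≠ 0 := hv.2.1
  obtain ⟨w, hwV, hw0, hws⟩ : ∃ w ∈ V, w ≠ 0 ∧
      Function.support w ⊂ Function.support v := by
    by_contra h; exact hminV ⟨hvV, hv0, h⟩
  set S := Function.support v with hSdef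
  set P := suppSub (ι := ι) S with hPdef
  set VS := V ⊓ P with hVSdef
  have hvVS : v ∈ VS := ⟨hvV, mem_suppSub.mpr subset_rfl⟩
  have hwVS : w ∈ VS := ⟨hwV, mem_suppSub.mpr hws.subset⟩
  -- `VS ⊓ W` is spanned by `v`
  have hinf : VS ⊓ W ≤ Submodule.span ℚ {v} := by
    rintro u ⟨⟨-, huP⟩, huW⟩
    have huS : Function.support u ⊆ S := mem_suppSub.mp huP
    obtain ⟨k, hk⟩ := Function.support_nonempty_iff.mpr hv0
    have hvk : v k ≠ 0 := hk
    set c := u k / v k with hcdef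
    have hu' : u - c • v ∈ W := W.sub_mem huW (W.smul_mem _ hv.1)
    have h0' : u - c • v = 0 := by
      by_contra hne
      apply hv.2.2
      refine ⟨u - c • v, hu', hne, ?_⟩
      have hsub : Function.support (u - c • v) ⊆ S := by
        intro j hj
        by_contra hjS
        apply hj
        have hu0 : u j = 0 := by
          by_contra h; exact hjS (huS h)
        have hv0' : v j = 0 := by
          by_contra h; exact hjS h
        simp [hu0, hv0', Pi.sub_apply]
      have hknot : k ∉ Function.support (u - c • v) := by
        simp only [Function.mem_support, not_not, Pi.sub_apply, Pi.smul_apply,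
          smul_eq_mul, hcdef]
        field_simp
        ring
      exact hsub.ssubset_of_ne (fun h => hknot (h ▸ hk))
    have : u = c • v := by rwa [sub_eq_zero] at h0'
    exact this ▸ Submodule.smul_mem _ _ (Submodule.mem_span_singleton_self v)
  -- rank bound: finrank VS ≤ 2
  have key := Submodule.finrank_sup_add_finrank_inf_eq VS W
  have h1 : Module.finrank ℚ (VS ⊔ W : Submodule ℚ (ι → ℚ)) ≤ Module.finrank ℚ V :=
    Submodule.finrank_mono (sup_le inf_le_left hWV)
  have h2 : Module.finrank ℚ (VS ⊓ W : Submodule ℚ (ι → ℚ)) ≤ 1 := by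
    have := Submodule.finrank_mono (M := ι → ℚ) hinf
    rwa [finrank_span_singleton hv0] at this
  have hVSle : Module.finrank ℚ VS ≤ 2 := by omega
  -- find a minimal vector `x` of `VS` below `w`
  obtain ⟨x, hxmin, hxw⟩ := exists_minSupp VS w hwVS hw0
  have hxVS : x ∈ VS := hxmin.1
  have hx0 : x ≠ 0 := hxmin.2.1
  have hxS : Function.support x ⊆ S := hxw.trans hws.subset
  obtain ⟨i0, hi0x⟩ := Function.support_nonempty_iff.mpr hx0
  have hxi0 : x i0 ≠ 0 := hi0x
  have hvi0 : v i0 ≠ 0 := hxS hi0x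
  set c := v i0 / x i0 with hcdef
  have hc0 : c ≠ 0 := div_ne_zero hvi0 hxi0
  set y := v - c • x with hydef
  have hyi0 : y i0 = 0 := by
    simp only [hydef, Pi.sub_apply, Pi.smul_apply, smul_eq_mul, hcdef]
    field_simp
    ring
  obtain ⟨j, hjS, hjw⟩ : ∃ j ∈ S, j ∉ Function.support w :=
    Set.exists_of_ssubset hws
  have hvj : v j ≠ 0 := hjS
  have hxj : x j = 0 := by
    by_contra h; exact hjw (hxw h)
  have hyj : y j ≠ 0 := by
    simp [hydef, hxj, hvj]
  have hy0 : y ≠ 0 := fun h => hyj (by rw [h]; rfl)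
  have hyVS : y ∈ VS := VS.sub_mem hvVS (VS.smul_mem c hxVS)
  -- x, v are linearly independent, so they span VS
  have hli : LinearIndependent ℚ ![x, v] := by
    rw [LinearIndependent.pair_iff]
    intro s t hst
    have hj := congrFun hst j
    simp only [Pi.add_apply, Pi.smul_apply, smul_eq_mul, hxj, mul_zero,
      zero_add, Pi.zero_apply] at hj
    have ht : t = 0 := by
      rcases mul_eq_zero.mp hj with h | h
      · exact h
      · exact absurd h hvj
    subst ht
    have hi := congrFun hst i0
    simp only [Pi.add_apply, Pi.smul_apply, smul_eq_mul, zero_mul, add_zero,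
      Pi.zero_apply] at hi
    rcases mul_eq_zero.mp hi with h | h
    · exact ⟨h, rfl⟩
    · exact absurd h hxi0
  have hspan : Submodule.span ℚ {x, v} = VS := by
    apply Submodule.eq_of_le_of_finrank_le
    · rw [Submodule.span_le]
      rw [Set.insert_subset_iff, Set.singleton_subset_iff]
      exact ⟨hxVS, hvVS⟩
    · have hr : Set.range ![x, v] = {x, v} := by
        simp [Matrix.range_cons, Matrix.range_empty]
        exact Set.pair_comm v x
      have := finrank_span_eq_card hli
      rw [hr] at this
      simp only [Fintype.card_fin] at this
      omega
  have hdecomp : ∀ u ∈ VS, ∃ a b : ℚ, a • x + b • v = u := by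
    intro u hu
    rw [← hspan] at hu
    exact Submodule.mem_span_pair.mp hu
  -- y is minimal in VS
  have hymin : MinSupp VS y := by
    refine ⟨hyVS, hy0, ?_⟩
    rintro ⟨u, huVS, hu0, hus⟩
    obtain ⟨a, b, hab⟩ := hdecomp u huVS
    have hi0y : y i0 = 0 := hyi0
    have hi0u : u i0 = 0 := by
      by_contra h
      exact (fun hy' => hy' hi0y) (hus.subset h)
    by_cases hb : b = 0
    · subst hb
      simp only [zero_smul, add_zero] at hab
      have := congrFun hab i0
      simp only [Pi.smul_apply, smul_eq_mul, hi0u] at this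
      rcases mul_eq_zero.mp this with h | h
      · apply hu0; rw [← hab, h, zero_smul]
      · exact absurd h hxi0
    · have hz : u - b • y = (a + b * c) • x := by
        rw [← hab, hydef]; ext k
        simp only [Pi.sub_apply, Pi.add_apply, Pi.smul_apply, smul_eq_mul]
        ring
      by_cases habc : a + b * c = 0
      · have hub : u = b • y := by
          have : u - b • y = 0 := by rw [hz, habc, zero_smul]
          rwa [sub_eq_zero] at this
        have : Function.support u = Function.support y := by
          rw [hub, Function.support_const_smul_of_ne_zero b y hb]
        exact hus.ne this
      · have := congrFun hz i0
        simp only [Pi.sub_apply, Pi.smul_apply, smul_eq_mul, hi0u, hi0y,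
          mul_zero, sub_zero, zero_sub] at this
        exact habc (by
          have hx' : (a + b * c) * x i0 = 0 := by linarith [this]
          rcases mul_eq_zero.mp hx' with h | h
          · exact h
          · exact absurd h hxi0)
  -- minimality in VS transfers to minimality in V
  have transfer : ∀ z, MinSupp VS z → MinSupp V z := by
    rintro z ⟨⟨hzV, hzP⟩, hz0, hzmin⟩
    refine ⟨hzV, hz0, ?_⟩
    rintro ⟨u, huV, hu0, hus⟩
    exact hzmin ⟨u, ⟨huV, mem_suppSub.mpr (hus.subset.trans (mem_suppSub.mp hzP))⟩,
      hu0, hus⟩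
  -- c • x is minimal in VS
  have hxmin' : MinSupp VS (c • x) := by
    refine ⟨VS.smul_mem c hxVS, smul_ne_zero hc0 hx0, ?_⟩
    rw [Function.support_const_smul_of_ne_zero c x hc0]
    exact hxmin.2.2
  exact ⟨c • x, y, transfer _ hxmin', transfer _ hymin, by rw [hydef]; abel⟩
end

section
/- Inner product formula: under the above setup, for every integer vector z ∈ Z₂ (i.e. every z ∈ ℤ^c with ∂ᵀ-action ∂ · z = 0), one has z ∘ λ = w(z) · k, where ∘ is the standard dot product on ℤ^c. -/
open Matrix

/-- determinant of the square submatrix of `M` formed by the columns indexed by `I`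
(in increasing order); junk value `0` if `I` does not have exactly `n` elements. -/
noncomputable def colsDet {n c : ℕ} (M : Matrix (Fin n) (Fin c) ℤ) (I : Finset (Fin c)) : ℤ :=
  if h : I.card = n then
    (M.submatrix id fun t => ((I.orderIsoOfFin h t : Fin c))).det
  else 0

/-- the cycle `C_I` attached to an `(n+1)`-element subset `I = {i₀ < … < i_n}` of column
indices of `D`: its `i_j`-th entry is `(−1)^j · det(D restricted to the columns I ∖ {i_j})`
and its entries outside `I` vanish (junk value `0` if `I.card ≠ n+1`). -/
noncomputable def cyc {n c : ℕ} (D : Matrix (Fin n) (Fin c) ℤ) (I : Finset (Fin c)) :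
    Fin c → ℤ := fun e =>
  if h : I.card = n + 1 ∧ e ∈ I then
    (-1) ^ ((((I.orderIsoOfFin h.1).symm ⟨e, h.2⟩ : Fin (n + 1)) : ℕ)) *
      colsDet D (I.erase e)
  else 0

/-- determinant of the square matrix whose first column is the coordinate vector of `z`
in the basis `Z'` of `ker B` and whose remaining columns are the coordinate vectors of
the kernel elements `cols`.  With `cols` the columns of `∂₊` indexed by `J`, this is the
winding number `w(z)`; in the dual setting it is the cutting number. -/
noncomputable def detCoord {b c r : ℕ} {B : Matrix (Fin b) (Fin c) ℤ}
    (Z' : Module.Basis (Fin (r + 1)) ℤ (LinearMap.ker B.mulVecLin))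
    (cols : Fin r → LinearMap.ker B.mulVecLin)
    (z : LinearMap.ker B.mulVecLin) : ℤ :=
  (Matrix.of fun i j =>
    Fin.cons (α := fun _ => ℤ) (Z'.repr z i) (fun t => Z'.repr (cols t) i) j).det

section Aux
open Finset
lemma image_orderEmbOfFin {c m : ℕ} (I : Finset (Fin c)) (h : I.card = m) :
    Finset.image (I.orderEmbOfFin h) univ = I := by
  apply Finset.coe_injective
  rw [coe_image, coe_univ, Set.image_univ, Finset.range_orderEmbOfFin]

theorem cauchyBinet {m s : ℕ} (M N : Matrix (Fin m) (Fin s) ℤ) :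
    (M * Nᵀ).det = ∑ I ∈ powersetCard m (univ : Finset (Fin s)),
      colsDet M I * colsDet N I := by
  classical
  have h1 : (M * Nᵀ).det
      = ∑ rr : Fin m → Fin s, (∏ i, M i (rr i)) * (Matrix.of fun i k => N k (rr i)).det := by
    have hrow : (M * Nᵀ) = Matrix.of (fun i => ∑ j : Fin s, M i j • (fun k => N k j)) := by
      ext i k
      simp [Matrix.mul_apply, Finset.sum_apply]
    have hms := MultilinearMap.map_sum
      (detRowAlternating (R := ℤ) (n := Fin m)).toMultilinearMap
      (fun i (j : Fin s) => M i j • fun k => N k j)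
    simp only [AlternatingMap.coe_multilinearMap] at hms
    rw [hrow]
    refine hms.trans ?_
    refine Finset.sum_congr rfl fun rr _ => ?_
    have hsm := MultilinearMap.map_smul_univ
      (detRowAlternating (R := ℤ) (n := Fin m)).toMultilinearMap
      (fun i => M i (rr i)) (fun i k => N k (rr i))
    simp only [AlternatingMap.coe_multilinearMap] at hsm
    rw [hsm, smul_eq_mul]
    rfl
  rw [h1]
  rw [← Finset.sum_filter_of_ne (p := fun rr => Function.Injective rr)
    (by
      intro rr _ hne
      by_contra hni
      apply hne
      obtain ⟨i, i', hii, hne'⟩ : ∃ i i', rr i = rr i' ∧ i ≠ i' := by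
        simp only [Function.Injective, not_forall] at hni
        obtain ⟨i, i', h, h'⟩ := hni
        exact ⟨i, i', h, h'⟩
      have : (Matrix.of fun i k => N k (rr i)).det = 0 :=
        Matrix.det_zero_of_row_eq hne' (by funext k; simp [hii])
      simp [this])]
  rw [← Finset.sum_fiberwise_of_maps_to (g := fun rr => Finset.image rr univ)
      (t := powersetCard m (univ : Finset (Fin s)))
      (by
        intro rr hrr
        rw [Finset.mem_filter] at hrr
        rw [Finset.mem_powersetCard]
        exact ⟨Finset.subset_univ _, by
          rw [Finset.card_image_of_injective _ hrr.2, card_univ, Fintype.card_fin]⟩)]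
  refine Finset.sum_congr rfl fun I hI => ?_
  rw [Finset.mem_powersetCard] at hI
  obtain ⟨-, hcard⟩ := hI
  set g : Fin m → Fin s := fun t => I.orderEmbOfFin hcard t with hg
  have hginj : Function.Injective g := (I.orderEmbOfFin hcard).injective
  have key : ∑ rr ∈ (Finset.univ.filter (fun rr => Function.Injective rr)).filter
        (fun rr => Finset.image rr univ = I),
      (∏ i, M i (rr i)) * (Matrix.of fun i k => N k (rr i)).det
      = ∑ σ : Equiv.Perm (Fin m),
        ((Equiv.Perm.sign σ : ℤ) * ∏ i, M i (g (σ i))) * (Matrix.of fun i k => N k (g i)).det := by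
    refine Finset.sum_bij'
      (i := fun rr hrr => Equiv.ofBijective
        (fun x => (I.orderIsoOfFin hcard).symm ⟨rr x, by
          have := (Finset.mem_filter.mp hrr).2
          rw [← this]; exact Finset.mem_image_of_mem _ (mem_univ x)⟩)
        (Finite.injective_iff_bijective.mp (fun x y hxy => by
          have hinj := (Finset.mem_filter.mp (Finset.mem_filter.mp hrr).1).2
          exact hinj (Subtype.ext_iff.mp ((I.orderIsoOfFin hcard).symm.injective hxy)))))
      (j := fun σ _ => g ∘ σ) ?_ ?_ ?_ ?_ ?_
    · intro rr hrr; exact mem_univ _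
    · intro σ _
      rw [Finset.mem_filter, Finset.mem_filter]
      refine ⟨⟨mem_univ _, hginj.comp σ.injective⟩, ?_⟩
      rw [← Finset.image_image, Finset.image_univ_equiv, image_orderEmbOfFin]
    · intro rr hrr
      funext x
      simp only [Equiv.ofBijective_apply, Function.comp_apply, hg]
      rw [← Finset.coe_orderIsoOfFin_apply, OrderIso.apply_symm_apply]
    · intro σ _
      ext x
      simp only [Equiv.ofBijective_apply, Function.comp_apply]
      have : (⟨g (σ x), by rw [hg]; exact Finset.orderEmbOfFin_mem _ _ _⟩ : {y // y ∈ I})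
          = (I.orderIsoOfFin hcard) (σ x) := by
        apply Subtype.ext; simp [hg, Finset.coe_orderIsoOfFin_apply]
      rw [this, OrderIso.symm_apply_apply]
    · intro rr hrr
      have hfact : ∀ σ : Equiv.Perm (Fin m), rr = g ∘ σ →
          (∏ i, M i (rr i)) * (Matrix.of fun i k => N k (rr i)).det
          = ((Equiv.Perm.sign σ : ℤ) * ∏ i, M i (g (σ i)))
            * (Matrix.of fun i k => N k (g i)).det := by
        intro σ hrrg
        have hsub : (Matrix.of fun i k => N k (rr i))
            = (Matrix.of fun i k => N k (g i)).submatrix σ id := by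
          ext i k; simp [hrrg]
        rw [hsub, Matrix.det_permute, hrrg]
        simp only [Function.comp_apply, Int.cast_id]
        ring
      refine hfact _ (funext fun x => ?_)
      simp only [Function.comp_apply, Equiv.ofBijective_apply, hg]
      rw [← Finset.coe_orderIsoOfFin_apply, OrderIso.apply_symm_apply]
  rw [key]
  have hN : (Matrix.of fun i k => N k (g i)).det = colsDet N I := by
    rw [colsDet, dif_pos hcard, ← Matrix.det_transpose (N.submatrix id _)]
    rfl
  have hM : ∑ σ : Equiv.Perm (Fin m), (Equiv.Perm.sign σ : ℤ) * ∏ i, M i (g (σ i))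
      = colsDet M I := by
    rw [colsDet, dif_pos hcard, ← Matrix.det_transpose (M.submatrix id _), Matrix.det_apply']
    refine Finset.sum_congr rfl fun σ _ => ?_
    simp only [Int.cast_id]
    rfl
  rw [← hM, Finset.sum_mul]
  refine Finset.sum_congr rfl fun σ _ => ?_
  rw [hN]

lemma dot_cyc {n c : ℕ} (D : Matrix (Fin n) (Fin c) ℤ) (u : Fin c → ℤ)
    (I : Finset (Fin c)) (hI : I.card = n + 1) :
    u ⬝ᵥ cyc D I = colsDet (Matrix.of (Fin.cons u (fun i k => D i k))) I := by
  classical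
  set g : Fin (n+1) → Fin c := fun t => I.orderEmbOfFin hI t with hg
  have hginj : Function.Injective g := (I.orderEmbOfFin hI).injective
  -- RHS: Laplace expansion along the first row
  have hrhs : colsDet (Matrix.of (Fin.cons u (fun i k => D i k))) I
      = ∑ j : Fin (n+1), (-1) ^ (j : ℕ) * u (g j) * colsDet D (I.erase (g j)) := by
    rw [colsDet, dif_pos hI, Matrix.det_succ_row_zero]
    refine Finset.sum_congr rfl fun j _ => ?_
    have hmem : g j ∈ I := Finset.orderEmbOfFin_mem _ _ _
    have hcard' : (I.erase (g j)).card = n := by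
      rw [Finset.card_erase_of_mem hmem, hI]
      rfl
    have hsub : ((Matrix.of (Fin.cons u (fun i k => D i k))).submatrix id
          (fun t => ((I.orderIsoOfFin hI t : Fin c)))).submatrix Fin.succ j.succAbove
        = D.submatrix id (fun t => (((I.erase (g j)).orderIsoOfFin hcard' t : Fin c))) := by
      have hmono : StrictMono (fun t => g (j.succAbove t)) :=
        (I.orderEmbOfFin hI).strictMono.comp (Fin.strictMono_succAbove j)
      have hin : ∀ t, g (j.succAbove t) ∈ I.erase (g j) := by
        intro t
        rw [Finset.mem_erase]
        exact ⟨fun hh => (Fin.succAbove_ne j t) (hginj hh), Finset.orderEmbOfFin_mem _ _ _⟩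
      have huniq : (fun t => g (j.succAbove t)) = ⇑((I.erase (g j)).orderEmbOfFin hcard') :=
        Finset.orderEmbOfFin_unique hcard' hin hmono
      ext i k
      simp only [Matrix.submatrix_apply, Matrix.of_apply, Fin.cons_succ, id]
      congr 1
      calc (((I.orderIsoOfFin hI) (j.succAbove k) : Fin c)) = g (j.succAbove k) := rfl
        _ = (I.erase (g j)).orderEmbOfFin hcard' k := congrFun huniq k
        _ = _ := rfl
    rw [hsub]
    rw [colsDet, dif_pos hcard']
    rfl
  rw [hrhs]
  -- LHS
  have hvan : ∀ e ∈ (univ : Finset (Fin c)), e ∉ Finset.image g univ → u e * cyc D I e = 0 := by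
    intro e _ he
    have : e ∉ I := by
      intro heI
      apply he
      rw [Finset.mem_image]
      exact ⟨(I.orderIsoOfFin hI).symm ⟨e, heI⟩, mem_univ _, by
        show ((I.orderIsoOfFin hI) _ : Fin c) = e
        rw [OrderIso.apply_symm_apply]⟩
    rw [cyc, dif_neg (by tauto), mul_zero]
  rw [dotProduct, ← Finset.sum_subset (Finset.subset_univ (Finset.image g univ)) hvan,
    Finset.sum_image (fun x _ y _ h => hginj h)]
  refine Finset.sum_congr rfl fun j _ => ?_
  have hmem : g j ∈ I := Finset.orderEmbOfFin_mem _ _ _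
  rw [cyc, dif_pos ⟨hI, hmem⟩]
  have hsymm : (I.orderIsoOfFin hI).symm ⟨g j, hmem⟩ = j := by
    have : (⟨g j, hmem⟩ : {x // x ∈ I}) = (I.orderIsoOfFin hI) j := by
      apply Subtype.ext; rfl
    rw [this, OrderIso.symm_apply_apply]
  rw [hsymm]
  ring

lemma det_border {n c : ℕ} (D : Matrix (Fin n) (Fin c) ℤ) (u y : Fin c → ℤ)
    (hu : D.mulVec u = 0) (hy : D.mulVec y = 0) :
    (Matrix.of (Fin.cons u (fun i k => D i k))
      * (Matrix.of (Fin.cons y (fun i k => D i k)))ᵀ).det = (u ⬝ᵥ y) * (D * Dᵀ).det := by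
  set P := Matrix.of (Fin.cons u (fun i k => D i k))
      * (Matrix.of (Fin.cons y (fun i k => D i k)))ᵀ with hP
  have hP0 : ∀ i : Fin n, P i.succ 0 = 0 := by
    intro i
    have : P i.succ 0 = ∑ k, D i k * y k := by
      simp [hP, Matrix.mul_apply]
    rw [this]
    have := congrFun hy i
    simpa [Matrix.mulVec, dotProduct] using this
  rw [Matrix.det_succ_column_zero]
  rw [Finset.sum_eq_single 0]
  · have h00 : P 0 0 = u ⬝ᵥ y := by simp [hP, Matrix.mul_apply, dotProduct]
    have hsub : P.submatrix (Fin.succAbove 0) Fin.succ = D * Dᵀ := by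
      rw [Fin.succAbove_zero]
      ext i k
      simp [hP, Matrix.mul_apply]
    rw [h00, hsub]
    simp
  · intro i _ hne
    rcases Fin.eq_succ_of_ne_zero hne with ⟨j, rfl⟩
    rw [hP0 j]
    ring
  · intro h; exact absurd (mem_univ _) h

lemma ker_transfer {a b c : ℕ} (Bm : Matrix (Fin a) (Fin b) ℤ)
    (B : Matrix (Fin b) (Fin c) ℤ) (n : ℕ)
    (Z : Module.Basis (Fin n) ℤ (LinearMap.ker Bm.mulVecLin))
    (D : Matrix (Fin n) (Fin c) ℤ)
    (hD : ∀ j i, B i j = ∑ l, D l j * (Z l : Fin b → ℤ) i)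
    (x : Fin c → ℤ) (hx : B.mulVec x = 0) : D.mulVec x = 0 := by
  have hsum : ∑ l, (D.mulVec x) l • Z l = 0 := by
    have hco : ((∑ l, (D.mulVec x) l • Z l : LinearMap.ker Bm.mulVecLin) : Fin b → ℤ)
        = B.mulVec x := by
      push_cast
      funext i
      simp only [Finset.sum_apply, Pi.smul_apply, smul_eq_mul]
      calc ∑ l, (D.mulVec x) l * (Z l : Fin b → ℤ) i
          = ∑ l, ∑ j, D l j * x j * (Z l : Fin b → ℤ) i := by
            refine Finset.sum_congr rfl fun l _ => ?_
            rw [show (D.mulVec x) l = ∑ j, D l j * x j from rfl, Finset.sum_mul]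
        _ = ∑ j, ∑ l, D l j * x j * (Z l : Fin b → ℤ) i := Finset.sum_comm
        _ = ∑ j, B i j * x j := by
            refine Finset.sum_congr rfl fun j _ => ?_
            rw [hD j i, Finset.sum_mul]
            refine Finset.sum_congr rfl fun l _ => ?_
            ring
        _ = (B.mulVec x) i := rfl
    have : ((∑ l, (D.mulVec x) l • Z l : LinearMap.ker Bm.mulVecLin) : Fin b → ℤ) = 0 := by
      rw [hco, hx]
    exact Subtype.ext this
  funext l
  exact Fintype.linearIndependent_iff.mp Z.linearIndependent _ hsum l

lemma detCoord_eq {b c r : ℕ} {B : Matrix (Fin b) (Fin c) ℤ}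
    (Z' : Module.Basis (Fin (r + 1)) ℤ (LinearMap.ker B.mulVecLin))
    (cols : Fin r → LinearMap.ker B.mulVecLin) (z : LinearMap.ker B.mulVecLin) :
    detCoord Z' cols z
      = (Matrix.of (Fin.cons (α := fun _ => Fin (r+1) → ℤ) (fun i => Z'.repr z i)
          (fun t i => Z'.repr (cols t) i))).det := by
  rw [detCoord, ← Matrix.det_transpose]
  congr 1
  ext j i
  simp only [Matrix.transpose_apply, Matrix.of_apply]
  induction j using Fin.cases with
  | zero => simp
  | succ t => simp

noncomputable def wLin {b c r : ℕ} {B : Matrix (Fin b) (Fin c) ℤ}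
    (Z' : Module.Basis (Fin (r + 1)) ℤ (LinearMap.ker B.mulVecLin))
    (cols : Fin r → LinearMap.ker B.mulVecLin) :
    LinearMap.ker B.mulVecLin →ₗ[ℤ] ℤ where
  toFun := detCoord Z' cols
  map_add' x y := by
    show detCoord Z' cols (x + y) = detCoord Z' cols x + detCoord Z' cols y
    have hu : ∀ v : LinearMap.ker B.mulVecLin,
        Matrix.of (Fin.cons (α := fun _ => Fin (r+1) → ℤ) (fun i => Z'.repr v i)
          (fun t i => Z'.repr (cols t) i))
        = (Matrix.of (Fin.cons (α := fun _ => Fin (r+1) → ℤ) (0 : Fin (r+1) → ℤ)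
          (fun t i => Z'.repr (cols t) i))).updateRow 0 (fun i => Z'.repr v i) := by
      intro v
      exact congrArg Matrix.of (Fin.update_cons_zero
        (α := fun _ => Fin (r+1) → ℤ) 0 (fun t i => Z'.repr (cols t) i)
        (fun i => Z'.repr v i)).symm
    rw [detCoord_eq, detCoord_eq, detCoord_eq, hu, hu, hu]
    have hadd : (fun i => Z'.repr (x + y) i)
        = (fun i => Z'.repr x i) + (fun i => Z'.repr y i) := by
      funext i; simp
    rw [hadd, Matrix.det_updateRow_add]
  map_smul' s x := by
    show detCoord Z' cols (s • x) = s • detCoord Z' cols x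
    have hu : ∀ v : LinearMap.ker B.mulVecLin,
        Matrix.of (Fin.cons (α := fun _ => Fin (r+1) → ℤ) (fun i => Z'.repr v i)
          (fun t i => Z'.repr (cols t) i))
        = (Matrix.of (Fin.cons (α := fun _ => Fin (r+1) → ℤ) (0 : Fin (r+1) → ℤ)
          (fun t i => Z'.repr (cols t) i))).updateRow 0 (fun i => Z'.repr v i) := by
      intro v
      exact congrArg Matrix.of (Fin.update_cons_zero
        (α := fun _ => Fin (r+1) → ℤ) 0 (fun t i => Z'.repr (cols t) i)
        (fun i => Z'.repr v i)).symm
    rw [detCoord_eq, detCoord_eq, hu, hu]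
    have hsm : (fun i => Z'.repr (s • x) i) = s • (fun i => Z'.repr x i) := by
      funext i; simp
    rw [hsm, Matrix.det_updateRow_smul, smul_eq_mul]


lemma dot_sum {c : ℕ} {ι : Type*} (s : Finset ι) (v : Fin c → ℤ) (w : ι → Fin c → ℤ) :
    v ⬝ᵥ (∑ i ∈ s, w i) = ∑ i ∈ s, v ⬝ᵥ w i := by
  simp only [dotProduct, Finset.sum_apply, Finset.mul_sum]
  rw [Finset.sum_comm]

end Aux

open Finset in
/-- Inner product formula: `z ∘ λ = w(z) · k` for every integer cycle `z ∈ Z₂`,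
where `λ = Σ_I w(C_I) • C_I` is the standard harmonic cycle and
`k = det([∂]_Z [∂]_Zᵀ)` is the tree number. -/
theorem inner_product_formula
    -- chain complex of free abelian groups around degree i
    (a b c d : ℕ) (ha : 0 < a) (hb : 0 < b) (hc : 0 < c) (hd : 0 < d)
    (Bm : Matrix (Fin a) (Fin b) ℤ) (B : Matrix (Fin b) (Fin c) ℤ)
    (Bp : Matrix (Fin c) (Fin d) ℤ)
    (h1 : Bm * B = 0) (h2 : B * Bp = 0)
    -- `Z` is a ℤ-basis of `Z₁ = ker ∂₋`, of rank n, and `D = [∂]_Z` is the matrix of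
    -- coordinates of the columns of `∂` in the basis `Z`
    (n : ℕ) (Z : Module.Basis (Fin n) ℤ (LinearMap.ker Bm.mulVecLin))
    (D : Matrix (Fin n) (Fin c) ℤ)
    (hD : ∀ j i, B i j = ∑ l, D l j * (Z l : Fin b → ℤ) i)
    -- `rk H̃_{i−1}(X) = 0` and `rk H̃_i(X) = 1`
    (hrkB : (B.map (Int.cast : ℤ → ℚ)).rank = n)
    (hker : Module.finrank ℚ (LinearMap.ker (B.map (Int.cast : ℤ → ℚ)).mulVecLin)
      = (Bp.map (Int.cast : ℤ → ℚ)).rank + 1)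
    -- `Z'` is a ℤ-basis of `Z₂ = ker ∂`, of rank r + 1
    (r : ℕ) (Z' : Module.Basis (Fin (r + 1)) ℤ (LinearMap.ker B.mulVecLin))
    -- `J` picks r columns of `∂₊` whose ℚ-span is the full column space of `∂₊`;
    -- `Jcol` are these columns as elements of `Z₂`
    (J : Fin r → Fin d) (hJinj : Function.Injective J)
    (Jcol : Fin r → LinearMap.ker B.mulVecLin)
    (hJcol : ∀ t, (Jcol t : Fin c → ℤ) = fun i => Bp i (J t))
    (hJspan : Submodule.span ℚ (Set.range fun t => fun i => (Bp i (J t) : ℚ))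
      = Submodule.span ℚ (Set.range fun j => fun i => (Bp i j : ℚ)))
    -- the cycles `C_I` as elements of `Z₂`
    (CI : Finset (Fin c) → LinearMap.ker B.mulVecLin)
    (hCI : ∀ I, (CI I : Fin c → ℤ) = cyc D I)
    -- an integer cycle `z ∈ Z₂`
    (z : Fin c → ℤ) (hz : z ∈ LinearMap.ker B.mulVecLin) :
    z ⬝ᵥ (∑ I ∈ Finset.powersetCard (n + 1) (Finset.univ : Finset (Fin c)),
        detCoord Z' Jcol (CI I) • cyc D I)
      = detCoord Z' Jcol ⟨z, hz⟩ * (D * Dᵀ).det := by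

  classical
  set k := (D * Dᵀ).det with hk
  have hDz : D.mulVec z = 0 :=
    ker_transfer Bm B n Z D hD z (by simpa [Matrix.mulVecLin_apply] using hz)
  have hDcyc : ∀ I, D.mulVec (cyc D I) = 0 := by
    intro I
    have h0 := (CI I).2
    rw [LinearMap.mem_ker, Matrix.mulVecLin_apply] at h0
    exact ker_transfer Bm B n Z D hD _ (by rw [← hCI I]; exact h0)
  have key : ∀ u y : Fin c → ℤ, D.mulVec u = 0 → D.mulVec y = 0 →
      ∑ I ∈ powersetCard (n+1) (univ : Finset (Fin c)),
        (u ⬝ᵥ cyc D I) * (y ⬝ᵥ cyc D I) = (u ⬝ᵥ y) * k := by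
    intro u y hu hy
    have hcg : ∀ I ∈ powersetCard (n+1) (univ : Finset (Fin c)),
        (u ⬝ᵥ cyc D I) * (y ⬝ᵥ cyc D I)
        = colsDet (Matrix.of (Fin.cons u (fun i k => D i k))) I
          * colsDet (Matrix.of (Fin.cons y (fun i k => D i k))) I := by
      intro I hI
      rw [Finset.mem_powersetCard] at hI
      rw [dot_cyc D u I hI.2, dot_cyc D y I hI.2]
    rw [Finset.sum_congr rfl hcg, ← cauchyBinet, det_border D u y hu hy]
  set m0 : LinearMap.ker B.mulVecLin :=
    ∑ I ∈ powersetCard (n+1) (univ : Finset (Fin c)), (z ⬝ᵥ cyc D I) • CI I with hm0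
  have hm0coe : (m0 : Fin c → ℤ)
      = ∑ I ∈ powersetCard (n+1) (univ : Finset (Fin c)), (z ⬝ᵥ cyc D I) • cyc D I := by
    rw [hm0]
    push_cast
    refine Finset.sum_congr rfl fun I _ => ?_
    rw [hCI I]
  set v : LinearMap.ker B.mulVecLin := m0 - k • ⟨z, hz⟩ with hv
  have hvcoe : (v : Fin c → ℤ) = (m0 : Fin c → ℤ) - k • z := by rw [hv]; push_cast; rfl
  have hDv : D.mulVec (v : Fin c → ℤ) = 0 := by
    have h0 := v.2
    rw [LinearMap.mem_ker, Matrix.mulVecLin_apply] at h0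
    exact ker_transfer Bm B n Z D hD _ h0
  have hdotv : ∀ y : Fin c → ℤ, D.mulVec y = 0 → y ⬝ᵥ (v : Fin c → ℤ) = 0 := by
    intro y hy
    rw [hvcoe, dotProduct_sub, hm0coe, dot_sum]
    have h1 : ∀ I ∈ powersetCard (n+1) (univ : Finset (Fin c)),
        y ⬝ᵥ ((z ⬝ᵥ cyc D I) • cyc D I) = (z ⬝ᵥ cyc D I) * (y ⬝ᵥ cyc D I) := by
      intro I _
      rw [dotProduct_smul, smul_eq_mul]
    rw [Finset.sum_congr rfl h1, key z y hDz hy, dotProduct_smul, smul_eq_mul,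
      dotProduct_comm z y]
    ring
  have hv0 : v = 0 := by
    have h2 : (v : Fin c → ℤ) ⬝ᵥ (v : Fin c → ℤ) = 0 := hdotv _ hDv
    have h3 : (v : Fin c → ℤ) = 0 := by
      funext e
      have hnn : ∀ e ∈ (univ : Finset (Fin c)),
          0 ≤ (v : Fin c → ℤ) e * (v : Fin c → ℤ) e := fun e _ => mul_self_nonneg _
      have h4 := (Finset.sum_eq_zero_iff_of_nonneg hnn).mp h2 e (mem_univ e)
      exact mul_self_eq_zero.mp h4
    exact Subtype.ext h3
  have hm0z : m0 = k • (⟨z, hz⟩ : LinearMap.ker B.mulVecLin) := by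
    have := sub_eq_zero.mp (hv ▸ hv0 : m0 - k • (⟨z, hz⟩ : LinearMap.ker B.mulVecLin) = 0)
    exact this
  calc z ⬝ᵥ (∑ I ∈ powersetCard (n+1) (univ : Finset (Fin c)),
        detCoord Z' Jcol (CI I) • cyc D I)
      = ∑ I ∈ powersetCard (n+1) (univ : Finset (Fin c)),
          (z ⬝ᵥ cyc D I) • wLin Z' Jcol (CI I) := by
        rw [dot_sum]
        refine Finset.sum_congr rfl fun I _ => ?_
        rw [dotProduct_smul, smul_eq_mul, smul_eq_mul, mul_comm]
        rfl
    _ = wLin Z' Jcol m0 := by rw [hm0, map_sum]; simp only [LinearMap.map_smul]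
    _ = wLin Z' Jcol (k • ⟨z, hz⟩) := by rw [hm0z]
    _ = detCoord Z' Jcol ⟨z, hz⟩ * k := by
        rw [LinearMap.map_smul, smul_eq_mul, mul_comm]
        rfl
end

section
/- Under the above setup, the standard harmonic cycle λ is a nonzero harmonic cycle: λ ≠ 0, ∂ · λ = 0, and ∂₊ᵀ · λ = 0 (i.e. λ lies in ker ∂ ∩ ker ∂₊ᵀ, the harmonic space 𝓗_i(X)). -/
open Matrix

namespace SHC

open Finset Equiv

variable {R : Type*} [CommRing R] {m c : ℕ}

noncomputable def colsDetR (M : Matrix (Fin m) (Fin c) R) (I : Finset (Fin c)) : R :=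
  if h : I.card = m then (M.submatrix id fun t => I.orderEmbOfFin h t).det else 0

lemma colsDet_eq {n c : ℕ} (M : Matrix (Fin n) (Fin c) ℤ) (I : Finset (Fin c)) :
    colsDet M I = colsDetR M I := by
  unfold colsDet colsDetR
  split_ifs with h
  · simp [Finset.coe_orderIsoOfFin_apply]
  · rfl

lemma colsDetR_cast {n c : ℕ} (M : Matrix (Fin n) (Fin c) ℤ) (I : Finset (Fin c)) :
    ((colsDetR M I : ℤ) : ℚ) = colsDetR (M.map (Int.cast : ℤ → ℚ)) I := by
  unfold colsDetR
  split_ifs with h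
  · rw [Matrix.submatrix_map]
    exact (RingHom.map_det (Int.castRingHom ℚ) _)
  · simp

theorem det_mul_transpose_eq_sum (A B : Matrix (Fin m) (Fin c) R) :
    det (A * Bᵀ) = ∑ p : Fin m → Fin c, det (A.submatrix id p) * ∏ i, B i (p i) := calc
  det (A * Bᵀ) = ∑ p : Fin m → Fin c, ∑ σ : Perm (Fin m),
      Perm.sign σ * ∏ i, A (σ i) (p i) * B i (p i) := by
    simp only [det_apply', mul_apply, transpose_apply, Finset.prod_univ_sum, Finset.mul_sum,
      Fintype.piFinset_univ]
    rw [Finset.sum_comm]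
  _ = _ := by
    refine Finset.sum_congr rfl fun p _ => ?_
    rw [det_apply', Finset.sum_mul]
    refine Finset.sum_congr rfl fun σ _ => ?_
    rw [Finset.prod_mul_distrib]
    simp only [submatrix_apply, id_eq]
    ring

theorem det_submatrix_eq_zero {A : Matrix (Fin m) (Fin c) R} {p : Fin m → Fin c}
    (hp : ¬ Function.Injective p) : det (A.submatrix id p) = 0 := by
  rw [Function.not_injective_iff] at hp
  obtain ⟨i, j, hpij, hij⟩ := hp
  exact det_zero_of_column_eq hij (fun k => by simp [hpij])

lemma image_orderEmbOfFin_perm (I : Finset (Fin c)) {m : ℕ} (h : I.card = m) (σ : Perm (Fin m)) :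
    Finset.image (fun t => I.orderEmbOfFin h (σ t)) Finset.univ = I := by
  ext e
  simp only [Finset.mem_image, Finset.mem_univ, true_and]
  constructor
  · rintro ⟨t, rfl⟩; exact Finset.orderEmbOfFin_mem _ _ _
  · intro he
    have : e ∈ Set.range (I.orderEmbOfFin h) := by rw [Finset.range_orderEmbOfFin]; exact he
    obtain ⟨t, ht⟩ := this
    exact ⟨σ.symm t, by simp [ht]⟩

theorem cauchyBinet (A B : Matrix (Fin m) (Fin c) R) :
    det (A * Bᵀ) = ∑ I ∈ Finset.powersetCard m (univ : Finset (Fin c)),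
      colsDetR A I * colsDetR B I := by
  rw [det_mul_transpose_eq_sum]
  rw [← Finset.sum_subset (Finset.filter_subset (fun p => Function.Injective p) Finset.univ)
    (fun p _ hp => by
      rw [det_submatrix_eq_zero (by simpa using hp)]
      exact zero_mul _)]
  have := Finset.sum_bij
    (s := (Finset.powersetCard m (univ : Finset (Fin c))) ×ˢ (univ : Finset (Perm (Fin m))))
    (t := Finset.filter (fun p => Function.Injective p) Finset.univ)
    (f := fun x : Finset (Fin c) × Perm (Fin m) =>
      if h : x.1.card = m then
        det (A.submatrix id fun t => x.1.orderEmbOfFin h (x.2 t)) *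
          ∏ i, B i (x.1.orderEmbOfFin h (x.2 i))
      else 0)
    (g := fun p => det (A.submatrix id p) * ∏ i, B i (p i))
    (i := fun x hx => fun t => x.1.orderEmbOfFin
      ((Finset.mem_powersetCard.mp (Finset.mem_product.mp hx).1).2) (x.2 t))
    ?_ ?_ ?_ ?_
  · rw [← this]
    rw [Finset.sum_product]
    refine Finset.sum_congr rfl fun I hI => ?_
    have h : I.card = m := (Finset.mem_powersetCard.mp hI).2
    simp only [dif_pos h]
    rw [colsDetR, colsDetR, dif_pos h, dif_pos h]
    have key : ∀ σ : Perm (Fin m),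
        det (A.submatrix id fun t => I.orderEmbOfFin h (σ t)) =
          Perm.sign σ * det (A.submatrix id fun t => I.orderEmbOfFin h t) := by
      intro σ
      have : (A.submatrix id fun t => I.orderEmbOfFin h (σ t)) =
          (A.submatrix id fun t => I.orderEmbOfFin h t).submatrix id σ := rfl
      rw [this, det_permute']
    calc ∑ σ : Perm (Fin m), det (A.submatrix id fun t => I.orderEmbOfFin h (σ t)) *
          ∏ i, B i (I.orderEmbOfFin h (σ i))
        = det (A.submatrix id fun t => I.orderEmbOfFin h t) *
          ∑ σ : Perm (Fin m), Perm.sign σ *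
            ∏ i, (B.submatrix id fun t => I.orderEmbOfFin h t) i (σ i) := by
          rw [Finset.mul_sum]
          refine Finset.sum_congr rfl fun σ _ => ?_
          rw [key σ]
          simp only [submatrix_apply, id_eq]
          ring
      _ = _ := by
          congr 1
          rw [← det_transpose (B.submatrix id fun t => I.orderEmbOfFin h t), det_apply']
          simp only [transpose_apply, submatrix_apply, id_eq]
  · intro x hx
    simp only [Finset.mem_filter, Finset.mem_univ, true_and]
    exact fun s t hst => x.2.injective ((x.1.orderEmbOfFin _).injective hst)
  · intro x hx y hy hxy
    have hx1 := (Finset.mem_powersetCard.mp (Finset.mem_product.mp hx).1).2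
    have hy1 := (Finset.mem_powersetCard.mp (Finset.mem_product.mp hy).1).2
    have hIx : x.1 = y.1 := by
      rw [← image_orderEmbOfFin_perm x.1 hx1 x.2, ← image_orderEmbOfFin_perm y.1 hy1 y.2]
      exact congrArg (fun f => Finset.image f Finset.univ) hxy
    obtain ⟨I, σ⟩ := x
    obtain ⟨I', τ⟩ := y
    simp only at hIx
    subst hIx
    simp only [Prod.mk.injEq, true_and]
    refine Equiv.ext fun t => ?_
    have := congrFun hxy t
    exact (I.orderEmbOfFin hx1).injective (by simpa using this)
  · intro p hp
    have hpinj : Function.Injective p := by simpa using hp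
    set I : Finset (Fin c) := Finset.image p Finset.univ with hI
    have hcard : I.card = m := by
      rw [hI, Finset.card_image_of_injective _ hpinj, Finset.card_univ, Fintype.card_fin]
    have hmem : ∀ t, p t ∈ I := fun t => Finset.mem_image_of_mem p (Finset.mem_univ t)
    have hbij : Function.Bijective (fun t => (I.orderIsoOfFin hcard).symm ⟨p t, hmem t⟩) := by
      refine (Finite.injective_iff_bijective).mp ?_
      intro s t hst
      apply hpinj
      have := congrArg (fun z => ((I.orderIsoOfFin hcard) z : Fin c)) hst
      simpa using this
    refine ⟨⟨I, Equiv.ofBijective _ hbij⟩, ?_, ?_⟩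
    · exact Finset.mem_product.mpr ⟨Finset.mem_powersetCard.mpr ⟨Finset.subset_univ _, hcard⟩,
        Finset.mem_univ _⟩
    · funext t
      simp only [Equiv.ofBijective_apply]
      rw [← Finset.coe_orderIsoOfFin_apply]
      simp
  · intro x hx
    have h := (Finset.mem_powersetCard.mp (Finset.mem_product.mp hx).1).2
    simp only [dif_pos h]

lemma orderEmbOfFin_erase {c n : ℕ} (I : Finset (Fin c)) (h : I.card = n + 1) (j : Fin (n + 1))
    (h' : (I.erase (I.orderEmbOfFin h j)).card = n) (t : Fin n) :
    (I.erase (I.orderEmbOfFin h j)).orderEmbOfFin h' t = I.orderEmbOfFin h (j.succAbove t) := by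
  have hmem : ∀ s : Fin n, I.orderEmbOfFin h (j.succAbove s) ∈ I.erase (I.orderEmbOfFin h j) := by
    intro s
    rw [Finset.mem_erase]
    exact ⟨fun hc => Fin.succAbove_ne j s ((I.orderEmbOfFin h).injective hc),
      Finset.orderEmbOfFin_mem _ _ _⟩
  have hmono : StrictMono (fun s : Fin n => I.orderEmbOfFin h (j.succAbove s)) :=
    (I.orderEmbOfFin h).strictMono.comp (Fin.strictMono_succAbove j)
  exact (congrFun (Finset.orderEmbOfFin_unique h' hmem hmono) t).symm

lemma dot_cyc {n c : ℕ} (D : Matrix (Fin n) (Fin c) ℤ) (I : Finset (Fin c))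
    (h : I.card = n + 1) (u : Fin c → ℚ) :
    u ⬝ᵥ (fun e => ((cyc D I e : ℤ) : ℚ)) =
      colsDetR (Matrix.of (Fin.cons u (D.map (Int.cast : ℤ → ℚ)))) I := by
  rw [colsDetR, dif_pos h, Matrix.det_succ_row_zero, dotProduct]
  rw [← Finset.sum_subset (Finset.subset_univ I) (fun e _ he => by
    have h0 : cyc D I e = 0 := by
      rw [cyc, dif_neg]; rintro ⟨-, hmem⟩; exact he hmem
    rw [h0]; simp)]
  symm
  refine Finset.sum_bij (fun (j : Fin (n+1)) (_ : j ∈ Finset.univ) => I.orderEmbOfFin h j)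
    (fun j _ => Finset.orderEmbOfFin_mem _ _ _)
    (fun j _ j' _ hjj => (I.orderEmbOfFin h).injective hjj)
    (fun e he => by
      have : e ∈ Set.range (I.orderEmbOfFin h) := by
        rw [Finset.range_orderEmbOfFin]; exact Finset.mem_coe.mpr he
      obtain ⟨j, hj⟩ := this
      exact ⟨j, Finset.mem_univ _, hj⟩)
    ?_
  intro j _
  have hmem : I.orderEmbOfFin h j ∈ I := Finset.orderEmbOfFin_mem _ _ _
  have hsymm : ((I.orderIsoOfFin h).symm ⟨I.orderEmbOfFin h j, hmem⟩ : Fin (n+1)) = j := by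
    apply (I.orderIsoOfFin h).injective
    rw [OrderIso.apply_symm_apply]
    exact Subtype.ext ((Finset.coe_orderIsoOfFin_apply I h j).trans rfl)
  have hcard' : (I.erase (I.orderEmbOfFin h j)).card = n := by
    rw [Finset.card_erase_of_mem hmem, h]; rfl
  rw [cyc, dif_pos ⟨h, hmem⟩, hsymm]
  push_cast
  rw [colsDet_eq, colsDetR_cast, colsDetR, dif_pos hcard']
  have hminor : ((Matrix.of (Fin.cons u (D.map (Int.cast : ℤ → ℚ)))).submatrix id
        (fun t => I.orderEmbOfFin h t)).submatrix Fin.succ j.succAbove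
      = (D.map (Int.cast : ℤ → ℚ)).submatrix id
        (fun t => (I.erase (I.orderEmbOfFin h j)).orderEmbOfFin hcard' t) := by
    ext l t
    simp only [Matrix.submatrix_apply, Matrix.of_apply, Fin.cons_succ, id_eq]
    rw [orderEmbOfFin_erase I h j hcard' t]
    exact congrFun (Fin.cons_succ (α := fun _ => Fin c → ℚ) u (D.map (Int.cast : ℤ → ℚ)) l) _
  rw [hminor]
  simp only [Matrix.submatrix_apply, Matrix.of_apply, Fin.cons_zero, id_eq]
  show (-1 : ℚ) ^ (j : ℕ) * u (I.orderEmbOfFin h j) * _ = _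
  ring

lemma exists_int_mul {k : ℕ} (q : Fin k → ℚ) :
    ∃ (mz : ℤ) (z : Fin k → ℤ), mz ≠ 0 ∧ ∀ i, (mz : ℚ) * q i = (z i : ℚ) := by
  refine ⟨∏ i, ((q i).den : ℤ), fun i => (q i).num * ∏ j ∈ Finset.univ.erase i, ((q j).den : ℤ),
    ?_, ?_⟩
  · exact Finset.prod_ne_zero_iff.mpr fun i _ => Int.natCast_ne_zero.mpr (q i).den_nz
  · intro i
    have h1 : (∏ j, ((q j).den : ℤ))
        = ((q i).den : ℤ) * ∏ j ∈ Finset.univ.erase i, ((q j).den : ℤ) :=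
      (Finset.mul_prod_erase _ _ (Finset.mem_univ i)).symm
    rw [h1]
    push_cast
    have h2 : ((q i).den : ℚ) * q i = (q i).num := by
      rw [mul_comm]
      exact Rat.mul_den_eq_num (q i)
    calc (((q i).den : ℚ) * ∏ j ∈ Finset.univ.erase i, ((q j).den : ℚ)) * q i
        = (∏ j ∈ Finset.univ.erase i, ((q j).den : ℚ)) * (((q i).den : ℚ) * q i) := by ring
      _ = _ := by rw [h2]; ring

lemma li_cast {k m : ℕ} {v : Fin k → (Fin m → ℤ)} (hv : LinearIndependent ℤ v) :
    LinearIndependent ℚ (fun t => (fun i => ((v t i : ℤ) : ℚ))) := by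
  rw [Fintype.linearIndependent_iff] at hv ⊢
  intro q hq t
  obtain ⟨mz, z, hmz, hz⟩ := exists_int_mul q
  have hzero : (∀ t, z t = 0) := by
    apply hv
    funext i
    have : (((∑ t, z t • v t) i : ℤ) : ℚ) = 0 := by
      have hqi := congrFun hq i
      simp only [Finset.sum_apply, Pi.smul_apply, smul_eq_mul, Pi.zero_apply] at hqi
      simp only [Finset.sum_apply, Pi.smul_apply, smul_eq_mul]
      push_cast
      calc ∑ t, (z t : ℚ) * (v t i : ℚ)
          = (mz : ℚ) * ∑ t, q t * (v t i : ℚ) := by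
            rw [Finset.mul_sum]
            exact Finset.sum_congr rfl fun t _ => by rw [← hz t]; ring
        _ = 0 := by rw [hqi, mul_zero]
    exact_mod_cast this
  have := hz t
  rw [hzero t] at this
  simp only [Int.cast_zero] at this
  rcases mul_eq_zero.mp this with h | h
  · exact absurd (by exact_mod_cast h) hmz
  · exact h

lemma cast_mulVec {a b : ℕ} (M : Matrix (Fin a) (Fin b) ℤ) (x : Fin b → ℤ) :
    (M.map (Int.cast : ℤ → ℚ)).mulVec (fun i => (x i : ℚ)) = fun i => ((M.mulVec x) i : ℚ) := by
  funext i
  simp only [Matrix.mulVec, Matrix.map_apply, dotProduct]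
  push_cast
  rfl

lemma exists_dual {c r : ℕ} (k : Fin r → (Fin c → ℚ)) (hk : LinearIndependent ℚ k)
    (w : Fin r → ℚ) : ∃ v : Fin c → ℚ, ∀ i, v ⬝ᵥ k i = w i := by
  set N : Matrix (Fin r) (Fin c) ℚ := Matrix.of k with hN
  have hrankT : Nᵀ.rank = r := by
    rw [Matrix.rank_eq_finrank_span_cols]
    have : Set.range Nᵀ.col = Set.range k := rfl
    rw [this, finrank_span_eq_card hk, Fintype.card_fin]
  have hrank : N.rank = r := by rw [← Matrix.rank_transpose]; exact hrankT
  have hsurj : LinearMap.range N.mulVecLin = ⊤ := by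
    apply Submodule.eq_top_of_finrank_eq
    rw [← Matrix.rank]
    rw [hrank, Module.finrank_pi, Fintype.card_fin]
  obtain ⟨v, hv⟩ := LinearMap.range_eq_top.mp hsurj w
  refine ⟨v, fun i => ?_⟩
  have := congrFun hv i
  rw [Matrix.mulVecLin_apply] at this
  rw [← this]
  simp only [Matrix.mulVec, hN]
  exact dotProduct_comm _ _

lemma det_ne_zero_of_rank {n : ℕ} {G : Matrix (Fin n) (Fin n) ℚ} (h : G.rank = n) :
    G.det ≠ 0 := by
  intro h0
  obtain ⟨g, hg, hGg⟩ := (Matrix.exists_mulVec_eq_zero_iff).mpr h0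
  have hker : g ∈ LinearMap.ker G.mulVecLin := by
    rw [LinearMap.mem_ker, Matrix.mulVecLin_apply, hGg]
  have hkerne : LinearMap.ker G.mulVecLin ≠ ⊥ := by
    intro hbot
    rw [hbot, Submodule.mem_bot] at hker
    exact hg hker
  have h1 : 0 < Module.finrank ℚ (LinearMap.ker G.mulVecLin) := by
    rcases Nat.eq_zero_or_pos (Module.finrank ℚ (LinearMap.ker G.mulVecLin)) with h' | h'
    · exact absurd (Submodule.finrank_eq_zero.mp h') hkerne
    · exact h'
  have h2 := LinearMap.finrank_range_add_finrank_ker G.mulVecLin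
  rw [Module.finrank_pi, Fintype.card_fin] at h2
  have h3 : G.rank = Module.finrank ℚ (LinearMap.range G.mulVecLin) := rfl
  omega

lemma dot_sum_right {ι : Type*} {c : ℕ} (v : Fin c → ℚ) (s : Finset ι) (f : ι → Fin c → ℚ) :
    v ⬝ᵥ (∑ i ∈ s, f i) = ∑ i ∈ s, v ⬝ᵥ f i := by
  simp only [dotProduct, Finset.sum_apply, Finset.mul_sum]
  exact Finset.sum_comm

lemma sum_dot_left {ι : Type*} {c : ℕ} (v : Fin c → ℚ) (s : Finset ι) (f : ι → Fin c → ℚ) :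
    (∑ i ∈ s, f i) ⬝ᵥ v = ∑ i ∈ s, f i ⬝ᵥ v := by
  rw [dotProduct_comm, dot_sum_right]
  exact Finset.sum_congr rfl fun i _ => dotProduct_comm _ _

end SHC

/-- The standard harmonic cycle `λ = Σ_I w(C_I) • C_I` is a nonzero harmonic cycle:
`λ ≠ 0`, `∂ · λ = 0` and `∂₊ᵀ · λ = 0`, i.e. `λ` lies in `ker ∂ ∩ ker ∂₊ᵀ`. -/
theorem standard_harmonic_cycle_nonzero_harmonic
    -- chain complex of free abelian groups around degree i
    (a b c d : ℕ) (ha : 0 < a) (hb : 0 < b) (hc : 0 < c) (hd : 0 < d)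
    (Bm : Matrix (Fin a) (Fin b) ℤ) (B : Matrix (Fin b) (Fin c) ℤ)
    (Bp : Matrix (Fin c) (Fin d) ℤ)
    (h1 : Bm * B = 0) (h2 : B * Bp = 0)
    -- `Z` is a ℤ-basis of `Z₁ = ker ∂₋`, of rank n, and `D = [∂]_Z` is the matrix of
    -- coordinates of the columns of `∂` in the basis `Z`
    (n : ℕ) (Z : Module.Basis (Fin n) ℤ (LinearMap.ker Bm.mulVecLin))
    (D : Matrix (Fin n) (Fin c) ℤ)
    (hD : ∀ j i, B i j = ∑ l, D l j * (Z l : Fin b → ℤ) i)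
    -- `rk H̃_{i−1}(X) = 0` and `rk H̃_i(X) = 1`
    (hrkB : (B.map (Int.cast : ℤ → ℚ)).rank = n)
    (hker : Module.finrank ℚ (LinearMap.ker (B.map (Int.cast : ℤ → ℚ)).mulVecLin)
      = (Bp.map (Int.cast : ℤ → ℚ)).rank + 1)
    -- `Z'` is a ℤ-basis of `Z₂ = ker ∂`, of rank r + 1
    (r : ℕ) (Z' : Module.Basis (Fin (r + 1)) ℤ (LinearMap.ker B.mulVecLin))
    -- `J` picks r columns of `∂₊` whose ℚ-span is the full column space of `∂₊`;
    -- `Jcol` are these columns as elements of `Z₂`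
    (J : Fin r → Fin d) (hJinj : Function.Injective J)
    (Jcol : Fin r → LinearMap.ker B.mulVecLin)
    (hJcol : ∀ t, (Jcol t : Fin c → ℤ) = fun i => Bp i (J t))
    (hJspan : Submodule.span ℚ (Set.range fun t => fun i => (Bp i (J t) : ℚ))
      = Submodule.span ℚ (Set.range fun j => fun i => (Bp i j : ℚ)))
    -- the cycles `C_I` as elements of `Z₂`
    (CI : Finset (Fin c) → LinearMap.ker B.mulVecLin)
    (hCI : ∀ I, (CI I : Fin c → ℤ) = cyc D I)
     :
    (∑ I ∈ Finset.powersetCard (n + 1) (Finset.univ : Finset (Fin c)),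
        detCoord Z' Jcol (CI I) • cyc D I) ≠ 0 ∧
    B.mulVec (∑ I ∈ Finset.powersetCard (n + 1) (Finset.univ : Finset (Fin c)),
        detCoord Z' Jcol (CI I) • cyc D I) = 0 ∧
    Bpᵀ.mulVec (∑ I ∈ Finset.powersetCard (n + 1) (Finset.univ : Finset (Fin c)),
        detCoord Z' Jcol (CI I) • cyc D I) = 0 := by
    classical
  open SHC in
  set lam : Fin c → ℤ := ∑ I ∈ Finset.powersetCard (n + 1) (Finset.univ : Finset (Fin c)),
      detCoord Z' Jcol (CI I) • cyc D I with hlam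
  set Bq : Matrix (Fin b) (Fin c) ℚ := B.map (Int.cast : ℤ → ℚ) with hBqdef
  set Dq : Matrix (Fin n) (Fin c) ℚ := D.map (Int.cast : ℤ → ℚ) with hDqdef
  set Bpq : Matrix (Fin c) (Fin d) ℚ := Bp.map (Int.cast : ℤ → ℚ) with hBpqdef
  set kZ : Fin (r+1) → (Fin c → ℚ) := fun i => fun e => (((Z' i : Fin c → ℤ)) e : ℚ) with hkZ
  -- independence of the coerced basis of Z₂
  have hZ'li : LinearIndependent ℤ (fun i => ((Z' i : Fin c → ℤ))) :=
    Z'.linearIndependent.map' (LinearMap.ker B.mulVecLin).subtype (Submodule.ker_subtype _)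
  have hkZli : LinearIndependent ℚ kZ := SHC.li_cast hZ'li
  -- coerced kernel elements are in ker Bq
  have hcastker : ∀ z : LinearMap.ker B.mulVecLin,
      Bq.mulVec (fun e => ((z : Fin c → ℤ) e : ℚ)) = 0 := by
    intro z
    rw [hBqdef, SHC.cast_mulVec]
    have hz := z.2
    rw [LinearMap.mem_ker, Matrix.mulVecLin_apply] at hz
    rw [hz]
    funext i; simp
  -- coerced repr expansion
  have hcastRepr : ∀ z : LinearMap.ker B.mulVecLin,
      (fun e => ((z : Fin c → ℤ) e : ℚ)) = ∑ i, ((Z'.repr z i : ℤ) : ℚ) • kZ i := by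
    intro z
    have h1 : ∑ i, Z'.repr z i • (Z' i : Fin c → ℤ) = (z : Fin c → ℤ) := by
      calc ∑ i, Z'.repr z i • (Z' i : Fin c → ℤ)
          = ((∑ i, Z'.repr z i • Z' i : LinearMap.ker B.mulVecLin) : Fin c → ℤ) := by
            rw [AddSubmonoidClass.coe_finset_sum]
            exact Finset.sum_congr rfl fun i _ => rfl
        _ = _ := by rw [Z'.sum_repr z]
    funext e
    have h2 := congrFun h1 e
    simp only [Finset.sum_apply, Pi.smul_apply, smul_eq_mul] at h2 ⊢
    rw [← h2]
    push_cast
    rfl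
  -- the kernel of Bq over ℚ is spanned by kZ
  have hkerEq : LinearMap.ker Bq.mulVecLin = Submodule.span ℚ (Set.range kZ) := by
    apply le_antisymm
    · intro y hy
      rw [LinearMap.mem_ker, Matrix.mulVecLin_apply] at hy
      obtain ⟨mz, z, hmz, hz⟩ := SHC.exists_int_mul y
      have hBz : B.mulVec z = 0 := by
        have h0 : Bq.mulVec (fun e => ((z e : ℤ) : ℚ)) = 0 := by
          have hzy : (fun e => ((z e : ℤ) : ℚ)) = (mz : ℚ) • y := by
            funext e
            rw [← hz e]
            simp [mul_comm]
          rw [hzy, Matrix.mulVec_smul, hy, smul_zero]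
        rw [hBqdef, SHC.cast_mulVec] at h0
        funext i
        have h9 := congrFun h0 i
        rw [Pi.zero_apply] at h9 ⊢
        exact_mod_cast h9
      have hzmem : z ∈ LinearMap.ker B.mulVecLin := by
        rw [LinearMap.mem_ker, Matrix.mulVecLin_apply, hBz]
      have hrepr := hcastRepr ⟨z, hzmem⟩
      have hy' : y = (mz : ℚ)⁻¹ • (fun e => ((z e : ℤ) : ℚ)) := by
        funext e
        rw [Pi.smul_apply, smul_eq_mul, ← hz e]
        have : (mz : ℚ) ≠ 0 := Int.cast_ne_zero.mpr hmz
        field_simp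
      rw [hy']
      refine Submodule.smul_mem _ _ ?_
      rw [show (fun e => ((z e : ℤ) : ℚ)) = ∑ i, ((Z'.repr ⟨z, hzmem⟩ i : ℤ) : ℚ) • kZ i from hrepr]
      exact Submodule.sum_mem _ fun i _ =>
        Submodule.smul_mem _ _ (Submodule.subset_span ⟨i, rfl⟩)
    · rw [Submodule.span_le]
      rintro _ ⟨i, rfl⟩
      rw [SetLike.mem_coe, LinearMap.mem_ker, Matrix.mulVecLin_apply]
      exact hcastker (Z' i)
  have hfinrank : Module.finrank ℚ (LinearMap.ker Bq.mulVecLin) = r + 1 := by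
    rw [hkerEq, finrank_span_eq_card hkZli, Fintype.card_fin]
  have hrkBp : Bpq.rank = r := by omega
  -- cofactor expansion of detCoord
  set Rm : Matrix (Fin (r+1)) (Fin r) ℤ := Matrix.of (fun i t => Z'.repr (Jcol t) i) with hRm
  set cof : Fin (r+1) → ℤ := fun i => (-1)^(i:ℕ) * ((Rm.submatrix i.succAbove id).det) with hcof
  have hdetCoord : ∀ z, detCoord Z' Jcol z = ∑ i, cof i * Z'.repr z i := by
    intro z
    rw [detCoord, Matrix.det_succ_column_zero]
    refine Finset.sum_congr rfl fun i _ => ?_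
    have h0 : (Matrix.of fun i j =>
        Fin.cons (α := fun _ => ℤ) (Z'.repr z i) (fun t => Z'.repr (Jcol t) i) j) i 0
        = Z'.repr z i := rfl
    have hmi : ((Matrix.of fun i j =>
        Fin.cons (α := fun _ => ℤ) (Z'.repr z i) (fun t => Z'.repr (Jcol t) i) j).submatrix
          i.succAbove Fin.succ) = Rm.submatrix i.succAbove id := by
      ext i' t
      simp only [Matrix.submatrix_apply, Matrix.of_apply, Fin.cons_succ, id_eq, hRm]
    rw [h0, hmi, hcof]
    ring
  -- dual vector v
  obtain ⟨v, hv⟩ := SHC.exists_dual kZ hkZli (fun i => (cof i : ℚ))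
  have hvz : ∀ z : LinearMap.ker B.mulVecLin,
      v ⬝ᵥ (fun e => ((z : Fin c → ℤ) e : ℚ)) = ((detCoord Z' Jcol z : ℤ) : ℚ) := by
    intro z
    rw [hcastRepr z, SHC.dot_sum_right, hdetCoord z]
    push_cast
    refine Finset.sum_congr rfl fun i _ => ?_
    rw [dotProduct_smul, hv i, smul_eq_mul]
    ring
  -- B factors through D
  set Zq : Matrix (Fin b) (Fin n) ℚ := Matrix.of (fun i l => (((Z l : Fin b → ℤ)) i : ℚ))
    with hZqdef
  have hBZD : Bq = Zq * Dq := by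
    ext i j
    rw [Matrix.mul_apply]
    simp only [hBqdef, Matrix.map_apply, hZqdef, hDqdef, Matrix.of_apply]
    rw [hD j i]
    push_cast
    exact Finset.sum_congr rfl fun l _ => by ring
  have hZli : LinearIndependent ℚ (fun l => fun i => (((Z l : Fin b → ℤ)) i : ℚ)) :=
    SHC.li_cast (Z.linearIndependent.map' (LinearMap.ker Bm.mulVecLin).subtype
      (Submodule.ker_subtype _))
  have hkerBD : ∀ y : Fin c → ℚ, Bq.mulVec y = 0 → Dq.mulVec y = 0 := by
    intro y hy
    rw [hBZD, ← Matrix.mulVec_mulVec] at hy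
    have hsum : ∑ l, (Dq.mulVec y) l • (fun i => (((Z l : Fin b → ℤ)) i : ℚ)) = 0 := by
      funext i
      have := congrFun hy i
      rw [Matrix.mulVec, dotProduct] at this
      simp only [Finset.sum_apply, Pi.smul_apply, smul_eq_mul, Pi.zero_apply] at this ⊢
      rw [← this]
      exact Finset.sum_congr rfl fun l _ => by rw [hZqdef]; simp [mul_comm]
    funext l
    exact Fintype.linearIndependent_iff.mp hZli _ hsum l
  have hrkD : Dq.rank = n := by
    apply le_antisymm
    · simpa using Matrix.rank_le_card_height Dq
    · calc n = Bq.rank := hrkB.symm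
        _ ≤ Dq.rank := by rw [hBZD]; exact Matrix.rank_mul_le_right _ _
  have hdetG : (Dq * Dqᵀ).det ≠ 0 := by
    apply SHC.det_ne_zero_of_rank
    rw [Matrix.rank_self_mul_transpose, hrkD]
  -- the coerced harmonic cycle
  have hlamQ : (fun e => ((lam e : ℤ) : ℚ)) =
      ∑ I ∈ Finset.powersetCard (n+1) (Finset.univ : Finset (Fin c)),
        ((detCoord Z' Jcol (CI I) : ℤ) : ℚ) • (fun e => ((cyc D I e : ℤ) : ℚ)) := by
    funext e
    rw [hlam]
    simp only [Finset.sum_apply, Pi.smul_apply, smul_eq_mul]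
    push_cast
    rfl
  -- the key identity
  have hSTAR : ∀ y : Fin c → ℚ, Dq.mulVec y = 0 →
      (fun e => ((lam e : ℤ) : ℚ)) ⬝ᵥ y = (v ⬝ᵥ y) * (Dq * Dqᵀ).det := by
    intro y hy
    rw [hlamQ, SHC.sum_dot_left]
    have hterm : ∀ I ∈ Finset.powersetCard (n+1) (Finset.univ : Finset (Fin c)),
        (((detCoord Z' Jcol (CI I) : ℤ) : ℚ) • (fun e => ((cyc D I e : ℤ) : ℚ))) ⬝ᵥ y
          = SHC.colsDetR (Matrix.of (Fin.cons v Dq)) I *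
            SHC.colsDetR (Matrix.of (Fin.cons y Dq)) I := by
      intro I hI
      have hIc : I.card = n + 1 := (Finset.mem_powersetCard.mp hI).2
      rw [smul_dotProduct, smul_eq_mul]
      have hwI : ((detCoord Z' Jcol (CI I) : ℤ) : ℚ)
          = v ⬝ᵥ (fun e => ((cyc D I e : ℤ) : ℚ)) := by
        rw [← hvz (CI I)]
        congr 1
        funext e
        rw [hCI I]
      rw [hwI, hDqdef, SHC.dot_cyc D I hIc v]
      rw [show (fun e => ((cyc D I e : ℤ) : ℚ)) ⬝ᵥ y
        = y ⬝ᵥ (fun e => ((cyc D I e : ℤ) : ℚ)) from dotProduct_comm _ _]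
      rw [SHC.dot_cyc D I hIc y]
    rw [Finset.sum_congr rfl hterm, ← SHC.cauchyBinet]
    -- compute the 2x2-block determinant
    rw [Matrix.det_succ_column_zero, Fin.sum_univ_succ]
    have hzero : ∀ l : Fin n,
        ((Matrix.of (Fin.cons v Dq)) * (Matrix.of (Fin.cons y Dq))ᵀ) l.succ 0 = 0 := by
      intro l
      rw [Matrix.mul_apply]
      have h3 : ∀ e, (Matrix.of (Fin.cons v Dq)) l.succ e *
          ((Matrix.of (Fin.cons y Dq))ᵀ) e 0 = Dq l e * y e := by
        intro e
        simp [Fin.cons_succ, Fin.cons_zero]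
        rfl
      rw [Finset.sum_congr rfl (fun e _ => h3 e)]
      have := congrFun hy l
      rw [Matrix.mulVec, dotProduct] at this
      simpa using this
    have htail : ∑ l : Fin n, (-1 : ℚ)^((l.succ : Fin (n+1)) : ℕ) *
        ((Matrix.of (Fin.cons v Dq)) * (Matrix.of (Fin.cons y Dq))ᵀ) l.succ 0 *
        ((((Matrix.of (Fin.cons v Dq)) * (Matrix.of (Fin.cons y Dq))ᵀ).submatrix
          l.succ.succAbove Fin.succ).det) = 0 := by
      refine Finset.sum_eq_zero fun l _ => ?_
      rw [hzero l]
      ring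
    rw [htail, add_zero]
    have hhead : ((Matrix.of (Fin.cons v Dq)) * (Matrix.of (Fin.cons y Dq))ᵀ) 0 0 = v ⬝ᵥ y := by
      rw [Matrix.mul_apply]
      simp [dotProduct, Fin.cons_zero]
      rfl
    have hminor : (((Matrix.of (Fin.cons v Dq)) * (Matrix.of (Fin.cons y Dq))ᵀ).submatrix
        (0 : Fin (n+1)).succAbove Fin.succ) = Dq * Dqᵀ := by
      ext l t
      rw [Matrix.submatrix_apply, Fin.succAbove_zero, Matrix.mul_apply, Matrix.mul_apply]
      refine Finset.sum_congr rfl fun e _ => ?_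
      simp [Fin.cons_succ]
      rfl
    rw [hhead, hminor]
    simp
  -- part 2 : B * lam = 0
  have hBlam : B.mulVec lam = 0 := by
    have hlin : B.mulVecLin lam = 0 := by
      rw [hlam, map_sum]
      refine Finset.sum_eq_zero fun I _ => ?_
      rw [LinearMap.map_smul]
      have h4 : B.mulVecLin (cyc D I) = 0 := by
        rw [← hCI I]
        exact (CI I).2
      rw [h4, smul_zero]
    rwa [Matrix.mulVecLin_apply] at hlin
  -- part 3 : Bpᵀ * lam = 0
  have hcolJker : ∀ t, Dq.mulVec (fun i => ((Bp i (J t) : ℤ) : ℚ)) = 0 := by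
    intro t
    apply hkerBD
    have h0 : (fun i => ((Bp i (J t) : ℤ) : ℚ)) = (fun e => (((Jcol t : Fin c → ℤ)) e : ℚ)) := by
      funext i
      rw [hJcol t]
    rw [h0]
    exact hcastker (Jcol t)
  have hwJ : ∀ t, detCoord Z' Jcol (Jcol t) = 0 := by
    intro t
    rw [detCoord]
    refine Matrix.det_zero_of_column_eq (i := 0) (j := Fin.succ t) (Fin.succ_ne_zero t).symm ?_
    intro k
    simp [Fin.cons_zero, Fin.cons_succ]
  have hvJ : ∀ t, v ⬝ᵥ (fun i => ((Bp i (J t) : ℤ) : ℚ)) = 0 := by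
    intro t
    have h0 : (fun i => ((Bp i (J t) : ℤ) : ℚ)) = (fun e => (((Jcol t : Fin c → ℤ)) e : ℚ)) := by
      funext i
      rw [hJcol t]
    rw [h0, hvz (Jcol t), hwJ t]
    simp
  have hBplam : Bpᵀ.mulVec lam = 0 := by
    funext j
    have hQ : (((Bpᵀ.mulVec lam) j : ℤ) : ℚ) = 0 := by
      have hdot : (((Bpᵀ.mulVec lam) j : ℤ) : ℚ)
          = (fun e => ((lam e : ℤ) : ℚ)) ⬝ᵥ (fun e => ((Bp e j : ℤ) : ℚ)) := by
        rw [Matrix.mulVec, dotProduct, dotProduct]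
        push_cast
        exact Finset.sum_congr rfl fun e _ => by rw [Matrix.transpose_apply]; ring
      rw [hdot]
      have hmem : (fun e => ((Bp e j : ℤ) : ℚ)) ∈
          Submodule.span ℚ (Set.range fun t => fun i => ((Bp i (J t) : ℤ) : ℚ)) := by
        rw [hJspan]
        exact Submodule.subset_span ⟨j, rfl⟩
      obtain ⟨q, hq⟩ := (Submodule.mem_span_range_iff_exists_fun ℚ).mp hmem
      rw [← hq, SHC.dot_sum_right]
      refine Finset.sum_eq_zero fun t _ => ?_
      rw [dotProduct_smul, smul_eq_mul]
      have h5 : (fun e => ((lam e : ℤ) : ℚ)) ⬝ᵥ (fun i => ((Bp i (J t) : ℤ) : ℚ)) = 0 := by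
        rw [hSTAR _ (hcolJker t), hvJ t, zero_mul]
      rw [h5, mul_zero]
    exact_mod_cast hQ
  -- part 1 : lam ≠ 0
  refine ⟨?_, hBlam, hBplam⟩
  intro hlam0
  -- independence of the J-columns over ℚ
  have hJcolQli : LinearIndependent ℚ (fun t => fun i => ((Bp i (J t) : ℤ) : ℚ)) := by
    rw [linearIndependent_iff_card_eq_finrank_span, Fintype.card_fin]
    have hspan : Submodule.span ℚ (Set.range fun t => fun i => ((Bp i (J t) : ℤ) : ℚ))
        = LinearMap.range Bpq.mulVecLin := by
      rw [hJspan, Matrix.range_mulVecLin]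
      congr 1
    rw [Set.finrank, hspan]
    exact hrkBp.symm
  have hJcolli : LinearIndependent ℤ Jcol := by
    rw [Fintype.linearIndependent_iff]
    intro g hg t
    have hcast : ∑ t', ((g t' : ℤ) : ℚ) • (fun i => ((Bp i (J t') : ℤ) : ℚ)) = 0 := by
      funext i
      have hcoe : ((∑ t', g t' • Jcol t' : LinearMap.ker B.mulVecLin) : Fin c → ℤ)
          = ∑ t', g t' • ((Jcol t' : Fin c → ℤ)) := by
        rw [AddSubmonoidClass.coe_finset_sum]
        exact Finset.sum_congr rfl fun t' _ => rfl
      have h0 : ((∑ t', g t' • ((Jcol t' : Fin c → ℤ))) i : ℚ) = 0 := by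
        rw [← hcoe, hg]
        simp
      simp only [Finset.sum_apply, Pi.smul_apply, smul_eq_mul, Pi.zero_apply] at h0 ⊢
      push_cast at h0
      rw [← h0]
      refine Finset.sum_congr rfl fun t' _ => ?_
      rw [hJcol t']
    have := Fintype.linearIndependent_iff.mp hJcolQli (fun t' => (g t' : ℚ)) hcast t
    exact_mod_cast this
  -- independence of the coordinate columns Rm over ℚ
  have hRmli : LinearIndependent ℤ (fun t => fun i => Rm i t) := by
    have h1 : LinearIndependent ℤ (fun t => Z'.repr (Jcol t)) :=
      hJcolli.map' Z'.repr.toLinearMap Z'.repr.ker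
    have h2 := h1.map' (Finsupp.linearEquivFunOnFinite ℤ ℤ (Fin (r+1))).toLinearMap
      (Finsupp.linearEquivFunOnFinite ℤ ℤ (Fin (r+1))).ker
    exact h2
  have hRmQli : LinearIndependent ℚ (fun t => fun i => ((Rm i t : ℤ) : ℚ)) :=
    SHC.li_cast hRmli
  -- a coordinate vector outside the span of the Rm-columns
  have hspanRm : ∃ i₀ : Fin (r+1), (Pi.single i₀ 1 : Fin (r+1) → ℚ) ∉
      Submodule.span ℚ (Set.range fun t => fun i => ((Rm i t : ℤ) : ℚ)) := by
    by_contra hall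
    push_neg at hall
    have htop : Submodule.span ℚ (Set.range fun t => fun i => ((Rm i t : ℤ) : ℚ)) = ⊤ := by
      rw [eq_top_iff]
      intro x _
      have hx : x = ∑ i, x i • (Pi.single i 1 : Fin (r+1) → ℚ) := by
        funext j
        simp only [Finset.sum_apply, Pi.smul_apply, smul_eq_mul]
        rw [Finset.sum_eq_single j]
        · simp
        · intro i _ hij
          simp [Pi.single_apply, hij]
        · intro hj
          exact absurd (Finset.mem_univ j) hj
      rw [hx]
      exact Submodule.sum_mem _ fun i _ => Submodule.smul_mem _ _ (hall i)
    have hle : Module.finrank ℚ (Fin (r+1) → ℚ) ≤ r := by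
      rw [← finrank_top ℚ (Fin (r+1) → ℚ), ← htop]
      exact (finrank_span_le_card _).trans (by
        simpa using Finset.card_image_le (s := Finset.univ)
          (f := fun t => fun i => ((Rm i t : ℤ) : ℚ)))
    rw [Module.finrank_pi, Fintype.card_fin] at hle
    omega
  obtain ⟨i₀, hi₀⟩ := hspanRm
  -- from lam = 0: all winding numbers of kernel elements vanish
  have hwz : ∀ z : LinearMap.ker B.mulVecLin, detCoord Z' Jcol z = 0 := by
    intro z
    have hy : Dq.mulVec (fun e => ((z : Fin c → ℤ) e : ℚ)) = 0 := hkerBD _ (hcastker z)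
    have hstar := hSTAR _ hy
    rw [hvz z] at hstar
    have hl0 : (fun e => ((lam e : ℤ) : ℚ)) ⬝ᵥ (fun e => ((z : Fin c → ℤ) e : ℚ)) = 0 := by
      have : (fun e => ((lam e : ℤ) : ℚ)) = 0 := by
        funext e
        rw [hlam0]
        simp
      rw [this, zero_dotProduct]
    rw [hl0] at hstar
    have := (mul_eq_zero.mp hstar.symm).resolve_right hdetG
    exact_mod_cast this
  have h0 := hwz (Z' i₀)
  -- cast the vanishing determinant to ℚ
  set Mq : Matrix (Fin (r+1)) (Fin (r+1)) ℚ := Matrix.of (fun i j =>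
    Fin.cons (α := fun _ => ℚ) ((Pi.single i₀ (1:ℚ) : Fin (r+1) → ℚ) i)
      (fun t => ((Rm i t : ℤ) : ℚ)) j)
    with hMqdef
  have hMqdet : Mq.det = 0 := by
    have hMeq : ((Matrix.of fun i j => Fin.cons (α := fun _ => ℤ) (Z'.repr (Z' i₀) i)
        (fun t => Z'.repr (Jcol t) i) j).map (Int.cast : ℤ → ℚ)) = Mq := by
      ext i j
      refine Fin.cases ?_ (fun t => ?_) j
      · simp only [Matrix.map_apply, Matrix.of_apply, Fin.cons_zero, hMqdef]
        rw [Module.Basis.repr_self]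
        simp [Finsupp.single_apply, Pi.single_apply, eq_comm]
      · simp only [Matrix.map_apply, Matrix.of_apply, Fin.cons_succ, hMqdef, hRm]
    rw [← hMeq, show (Int.cast : ℤ → ℚ) = ⇑(Int.castRingHom ℚ) from rfl,
      ← RingHom.mapMatrix_apply, ← RingHom.map_det]
    rw [detCoord] at h0
    rw [h0]
    simp
  obtain ⟨g, hgne, hgv⟩ := Matrix.exists_mulVec_eq_zero_iff.mpr hMqdet
  have hexp : g 0 • (Pi.single i₀ (1:ℚ) : Fin (r+1) → ℚ)
      + ∑ t, g t.succ • (fun i => ((Rm i t : ℤ) : ℚ)) = 0 := by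
    funext i
    have hgvi := congrFun hgv i
    rw [Matrix.mulVec, dotProduct, Fin.sum_univ_succ] at hgvi
    simp only [Pi.add_apply, Pi.smul_apply, smul_eq_mul, Finset.sum_apply, Pi.zero_apply,
      hMqdef, Matrix.of_apply, Fin.cons_zero, Fin.cons_succ] at hgvi ⊢
    rw [← hgvi, mul_comm (g 0)]
    congr 1
    exact Finset.sum_congr rfl fun t _ => mul_comm _ _
  by_cases hg0 : g 0 = 0
  · rw [hg0, zero_smul, zero_add] at hexp
    have hzero := Fintype.linearIndependent_iff.mp hRmQli (fun t => g t.succ) hexp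
    apply hgne
    funext j
    refine Fin.cases hg0 hzero j
  · apply hi₀
    have hsingle : (Pi.single i₀ (1:ℚ) : Fin (r+1) → ℚ)
        = (-(g 0)⁻¹) • ∑ t, g t.succ • (fun i => ((Rm i t : ℤ) : ℚ)) := by
      have h7 := hexp
      rw [add_eq_zero_iff_eq_neg] at h7
      have h8 := congrArg (fun w => (g 0)⁻¹ • w) h7
      beta_reduce at h8
      rw [smul_smul, inv_mul_cancel₀ hg0, one_smul] at h8
      rw [smul_neg, ← neg_smul] at h8
      exact h8
    rw [hsingle]
    exact Submodule.smul_mem _ _ (Submodule.sum_mem _ fun t _ =>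
      Submodule.smul_mem _ _ (Submodule.subset_span ⟨t, rfl⟩))
end

section
/- Under the above setup, λ ∘ λ = k · Σ_I w(C_I)², where ∘ is the standard dot product on ℤ^c and the sum ranges over all (n+1)-element subsets I of Fin c. -/
open Matrix
open Finset

theorem my_cauchy_binet {m c : ℕ} (A : Matrix (Fin m) (Fin c) ℤ) (B : Matrix (Fin c) (Fin m) ℤ) :
    (A * B).det = ∑ I ∈ Finset.powersetCard m (Finset.univ : Finset (Fin c)),
      if h : I.card = m then
        (A.submatrix id (I.orderEmbOfFin h)).det * (B.submatrix (I.orderEmbOfFin h) id).det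
      else 0 := by
  classical
  have step1 : (A * B).det
      = ∑ p : Fin m → Fin c, (∏ i, B (p i) i) * (A.submatrix id p).det := by
    simp only [det_apply', mul_apply, Finset.prod_univ_sum, Finset.mul_sum,
      Fintype.piFinset_univ]
    rw [Finset.sum_comm]
    refine Finset.sum_congr rfl fun p _ => ?_
    refine Finset.sum_congr rfl fun σ _ => ?_
    rw [Finset.prod_mul_distrib]
    simp only [submatrix_apply, id_eq]
    push_cast
    ring
  have step2 : (A * B).det
      = ∑ p ∈ Finset.univ.filter (fun p : Fin m → Fin c => Function.Injective p),
          (∏ i, B (p i) i) * (A.submatrix id p).det := by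
    rw [step1]
    refine (Finset.sum_subset (Finset.filter_subset _ _) fun p _ hp => ?_).symm
    obtain ⟨i, j, hij, hne⟩ : ∃ i j, p i = p j ∧ i ≠ j := by
      simp only [Finset.mem_filter, Finset.mem_univ, true_and] at hp
      unfold Function.Injective at hp; push_neg at hp
      obtain ⟨i, j, h1, h2⟩ := hp; exact ⟨i, j, h1, h2⟩
    rw [det_zero_of_column_eq hne fun k => by simp [submatrix_apply, hij], mul_zero]
  rw [step2, ← Finset.sum_attach (Finset.powersetCard m (Finset.univ : Finset (Fin c)))]
  have hcard : ∀ x : {I // I ∈ Finset.powersetCard m (Finset.univ : Finset (Fin c))},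
      x.1.card = m := fun x => (Finset.mem_powersetCard.mp x.2).2
  have expand : ∀ x : {I // I ∈ Finset.powersetCard m (Finset.univ : Finset (Fin c))},
      (if h : x.1.card = m then
          (A.submatrix id (x.1.orderEmbOfFin h)).det * (B.submatrix (x.1.orderEmbOfFin h) id).det
        else 0)
      = ∑ π : Equiv.Perm (Fin m),
          (∏ i, B (x.1.orderEmbOfFin (hcard x) (π i)) i) *
            (A.submatrix id (x.1.orderEmbOfFin (hcard x) ∘ π)).det := by
    intro x
    rw [dif_pos (hcard x)]
    have hperm : ∀ π : Equiv.Perm (Fin m),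
        (A.submatrix id (⇑(x.1.orderEmbOfFin (hcard x)) ∘ ⇑π)).det
        = (Equiv.Perm.sign π : ℤ) * (A.submatrix id (x.1.orderEmbOfFin (hcard x))).det := by
      intro π
      rw [show A.submatrix id (⇑(x.1.orderEmbOfFin (hcard x)) ∘ ⇑π)
          = (A.submatrix id (x.1.orderEmbOfFin (hcard x))).submatrix id π by
        rw [submatrix_submatrix]; rfl, det_permute']
      norm_cast
    simp_rw [hperm]
    rw [det_apply' (B.submatrix _ id), Finset.mul_sum]
    refine Finset.sum_congr rfl fun π _ => ?_
    simp only [submatrix_apply, id_eq]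
    push_cast
    ring
  simp_rw [expand]
  rw [← Finset.sum_product']
  refine (Finset.sum_bij
    (fun (x : {I // I ∈ Finset.powersetCard m (Finset.univ : Finset (Fin c))} × Equiv.Perm (Fin m))
      (_ : x ∈ _ ×ˢ _) => ⇑(x.1.1.orderEmbOfFin (hcard x.1)) ∘ ⇑x.2) ?_ ?_ ?_ ?_).symm
  · intro x _
    simp only [Finset.mem_filter, Finset.mem_univ, true_and]
    exact (x.1.1.orderEmbOfFin (hcard x.1)).injective.comp x.2.injective
  · rintro ⟨x, π⟩ _ ⟨y, ρ⟩ _ hxy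
    have hxy' : ⇑(x.1.orderEmbOfFin (hcard x)) ∘ ⇑π = ⇑(y.1.orderEmbOfFin (hcard y)) ∘ ⇑ρ := hxy
    have hsets : x.1 = y.1 := by
      have hx : Set.range (⇑(x.1.orderEmbOfFin (hcard x)) ∘ ⇑π) = ↑x.1 := by
        rw [Set.range_comp, π.surjective.range_eq, Set.image_univ,
          Finset.range_orderEmbOfFin]
      have hy : Set.range (⇑(y.1.orderEmbOfFin (hcard y)) ∘ ⇑ρ) = ↑y.1 := by
        rw [Set.range_comp, ρ.surjective.range_eq, Set.image_univ,
          Finset.range_orderEmbOfFin]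
      exact Finset.coe_injective (hx.symm.trans (by rw [hxy']; exact hy))
    have hxsub : x = y := Subtype.ext hsets
    subst hxsub
    have hπρ : π = ρ := by
      have hfun : (⇑π : Fin m → Fin m) = ⇑ρ :=
        funext fun i => (x.1.orderEmbOfFin (hcard x)).injective (congrFun hxy' i)
      exact Equiv.coe_fn_injective hfun
    rw [hπρ]
  · intro p hp
    simp only [Finset.mem_filter, Finset.mem_univ, true_and] at hp
    have hI : Finset.image p Finset.univ ∈ Finset.powersetCard m (Finset.univ : Finset (Fin c)) := by
      rw [Finset.mem_powersetCard]
      exact ⟨Finset.subset_univ _, by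
        rw [Finset.card_image_of_injective _ hp, Finset.card_univ, Fintype.card_fin]⟩
    set I : Finset (Fin c) := Finset.image p Finset.univ with hIdef
    have hIc : I.card = m := (Finset.mem_powersetCard.mp hI).2
    have hmem : ∀ i, p i ∈ I := fun i => Finset.mem_image_of_mem p (Finset.mem_univ i)
    have hinj0 : Function.Injective (fun i => (I.orderIsoOfFin hIc).symm ⟨p i, hmem i⟩) := by
      intro i j hij
      apply hp
      have := congrArg (I.orderIsoOfFin hIc) hij
      simp only [OrderIso.apply_symm_apply] at this
      exact congrArg Subtype.val this
    refine ⟨⟨⟨I, hI⟩, Equiv.ofBijective _ ((Finite.injective_iff_bijective).mp hinj0)⟩,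
      Finset.mem_product.mpr ⟨Finset.mem_attach _ _, Finset.mem_univ _⟩, ?_⟩
    funext i
    simp only [Function.comp_apply, Equiv.ofBijective_apply]
    rw [← Finset.coe_orderIsoOfFin_apply, OrderIso.apply_symm_apply]
  · intro x _
    rfl


theorem cyc_dotProduct {n c : ℕ} (D : Matrix (Fin n) (Fin c) ℤ) {I : Finset (Fin c)}
    (h : I.card = n + 1) (v : Fin c → ℤ) :
    cyc D I ⬝ᵥ v =
      ((Matrix.of (Fin.cons v (fun i => D i)) : Matrix (Fin (n + 1)) (Fin c) ℤ).submatrix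
        id (I.orderEmbOfFin h)).det := by
  classical
  have hvanish : ∀ e ∈ Finset.univ, e ∉ I → cyc D I e * v e = 0 := by
    intro e _ he
    rw [cyc, dif_neg (by tauto), zero_mul]
  have h1 : cyc D I ⬝ᵥ v = ∑ e ∈ I, cyc D I e * v e :=
    (Finset.sum_subset I.subset_univ hvanish).symm
  have h2 : ∑ e ∈ I, cyc D I e * v e
      = ∑ j : Fin (n + 1),
          cyc D I (I.orderEmbOfFin h j) * v (I.orderEmbOfFin h j) := by
    refine Finset.sum_bij' (i := fun e he => (I.orderIsoOfFin h).symm ⟨e, he⟩)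
      (j := fun j _ => I.orderEmbOfFin h j) (fun e he => Finset.mem_univ _)
      (fun j _ => Finset.orderEmbOfFin_mem I h j) ?_ ?_ ?_
    · intro e he
      exact congrArg Subtype.val ((I.orderIsoOfFin h).apply_symm_apply ⟨e, he⟩)
    · intro j _
      exact (I.orderIsoOfFin h).symm_apply_apply j
    · intro e he
      have hre : (I.orderEmbOfFin h) ((I.orderIsoOfFin h).symm ⟨e, he⟩) = e :=
        congrArg Subtype.val ((I.orderIsoOfFin h).apply_symm_apply ⟨e, he⟩)
      rw [hre]
  have hcyc : ∀ j : Fin (n + 1), cyc D I (I.orderEmbOfFin h j)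
      = (-1) ^ (j : ℕ) * colsDet D (I.erase (I.orderEmbOfFin h j)) := by
    intro j
    rw [cyc, dif_pos ⟨h, Finset.orderEmbOfFin_mem I h j⟩]
    have e1 : ((I.orderIsoOfFin h).symm
        ⟨I.orderEmbOfFin h j, Finset.orderEmbOfFin_mem I h j⟩) = j :=
      (I.orderIsoOfFin h).symm_apply_apply j
    rw [e1]
  have hcols : ∀ j : Fin (n + 1),
      colsDet D (I.erase (I.orderEmbOfFin h j))
      = (((Matrix.of (Fin.cons v (fun i => D i)) : Matrix (Fin (n + 1)) (Fin c) ℤ).submatrix id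
          (I.orderEmbOfFin h)).submatrix Fin.succ j.succAbove).det := by
    intro j
    have hcarde : (I.erase (I.orderEmbOfFin h j)).card = n := by
      rw [Finset.card_erase_of_mem (Finset.orderEmbOfFin_mem I h j), h]
      omega
    rw [colsDet, dif_pos hcarde]
    have hsm : StrictMono (⇑(I.orderEmbOfFin h) ∘ j.succAbove) :=
      (I.orderEmbOfFin h).strictMono.comp (Fin.strictMono_succAbove j)
    have hmem : ∀ t, (⇑(I.orderEmbOfFin h) ∘ j.succAbove) t
        ∈ I.erase (I.orderEmbOfFin h j) := by
      intro t
      refine Finset.mem_erase.mpr ⟨?_, Finset.orderEmbOfFin_mem I h _⟩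
      intro hEq
      exact (Fin.succAbove_ne j t) ((I.orderEmbOfFin h).injective hEq)
    have hemb : (fun t => (((I.erase (I.orderEmbOfFin h j)).orderIsoOfFin hcarde t : Fin c)))
        = ⇑(I.orderEmbOfFin h) ∘ j.succAbove :=
      (Finset.orderEmbOfFin_unique hcarde hmem hsm).symm
    rw [hemb]
    congr 1
  rw [h1, h2, det_succ_row_zero]
  refine Finset.sum_congr rfl fun j _ => ?_
  rw [hcyc j, hcols j]
  simp only [submatrix_apply, id_eq, Matrix.of_apply, Fin.cons_zero]
  ring

theorem cyc_dot_row {n c : ℕ} (D : Matrix (Fin n) (Fin c) ℤ) {I : Finset (Fin c)}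
    (h : I.card = n + 1) (l : Fin n) : cyc D I ⬝ᵥ (fun e => D l e) = 0 := by
  rw [cyc_dotProduct D h]
  refine det_zero_of_row_eq (i := (0 : Fin (n + 1))) (j := Fin.succ l)
    (Fin.succ_ne_zero l).symm ?_
  funext t
  simp [submatrix_apply, Fin.cons_zero, Fin.cons_succ]

theorem key_sum {n c : ℕ} (D : Matrix (Fin n) (Fin c) ℤ) {z : Fin c → ℤ}
    (hz : D.mulVec z = 0) (e : Fin c) :
    ∑ I ∈ Finset.powersetCard (n + 1) (Finset.univ : Finset (Fin c)),
      (cyc D I ⬝ᵥ z) * cyc D I e = (D * Dᵀ).det * z e := by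
  classical
  set N : (Fin c → ℤ) → Matrix (Fin (n + 1)) (Fin c) ℤ :=
    fun u => Matrix.of (Fin.cons u (fun i => D i)) with hN
  have hstep : ∀ I ∈ Finset.powersetCard (n + 1) (Finset.univ : Finset (Fin c)),
      (cyc D I ⬝ᵥ z) * cyc D I e
      = (if h : I.card = n + 1 then
          ((N z).submatrix id (I.orderEmbOfFin h)).det *
          (((N (Pi.single e 1))ᵀ).submatrix (I.orderEmbOfFin h) id).det
        else 0) := by
    intro I hI
    have h : I.card = n + 1 := (Finset.mem_powersetCard.mp hI).2
    rw [dif_pos h, ← cyc_dotProduct D h z]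
    congr 1
    have he1 : cyc D I e = cyc D I ⬝ᵥ Pi.single e 1 := by
      rw [dotProduct]
      simp [Pi.single_apply, mul_ite, Finset.sum_ite_eq']
    rw [he1, cyc_dotProduct D h, ← Matrix.det_transpose, Matrix.transpose_submatrix]
  rw [Finset.sum_congr rfl hstep, ← my_cauchy_binet]
  have hrow : ∀ j : Fin (n + 1), (N z * (N (Pi.single e 1))ᵀ) 0 j
      = Fin.cons (α := fun _ => ℤ) (z e) (fun _ => 0) j := by
    intro j
    refine Fin.cases ?_ (fun j' => ?_) j
    · simp only [mul_apply, transpose_apply, Fin.cons_zero, hN, Matrix.of_apply]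
      simp [Pi.single_apply, mul_ite, Finset.sum_ite_eq']
    · simp only [mul_apply, transpose_apply, Fin.cons_succ, hN, Matrix.of_apply, Fin.cons_zero]
      have hthis := congrFun hz j'
      simp only [mulVec, dotProduct, Pi.zero_apply] at hthis
      rw [← hthis]
      exact Finset.sum_congr rfl fun t _ => mul_comm _ _
  rw [det_succ_row_zero,
    Fintype.sum_eq_single (0 : Fin (n + 1)) (fun j hj => ?_)]
  · rw [hrow 0]
    have hsub : ((N z * (N (Pi.single e 1))ᵀ).submatrix Fin.succ
        ((0 : Fin (n + 1)).succAbove)) = D * Dᵀ := by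
      rw [Fin.succAbove_zero]
      ext i j
      simp only [submatrix_apply, mul_apply, transpose_apply, hN, Matrix.of_apply,
        Fin.cons_succ]
    rw [hsub]
    simp only [Fin.cons_zero, Fin.val_zero, pow_zero, one_mul]
    ring
  · rw [hrow j]
    obtain ⟨j', rfl⟩ := Fin.eq_succ_of_ne_zero hj
    simp [Fin.cons_succ]

noncomputable def wMap {b c r : ℕ} {B : Matrix (Fin b) (Fin c) ℤ}
    (Z' : Module.Basis (Fin (r + 1)) ℤ (LinearMap.ker B.mulVecLin))
    (cols : Fin r → LinearMap.ker B.mulVecLin) :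
    LinearMap.ker B.mulVecLin →ₗ[ℤ] ℤ := by
  classical
  refine ⟨⟨detCoord Z' cols, ?_⟩, ?_⟩ <;>
  · intro x y
    have hM : ∀ z : LinearMap.ker B.mulVecLin,
        (Matrix.of fun i j =>
          Fin.cons (α := fun _ => ℤ) (Z'.repr z i) (fun t => Z'.repr (cols t) i) j)
        = Matrix.updateCol
            (Matrix.of fun i j =>
              Fin.cons (α := fun _ => ℤ) (0 : ℤ) (fun t => Z'.repr (cols t) i) j)
            0 (fun i => Z'.repr z i) := by
      intro z
      ext i j
      rw [Matrix.updateCol_apply]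
      refine Fin.cases ?_ (fun j' => ?_) j
      · simp
      · simp [Fin.succ_ne_zero]
    simp only [detCoord, hM]
    first
    | (rw [show (fun i => Z'.repr (x + y) i)
          = (fun i => Z'.repr x i) + fun i => Z'.repr y i by ext i; simp,
        Matrix.det_updateCol_add])
    | (rw [show (fun i => Z'.repr (x • y) i) = x • fun i => Z'.repr y i by ext i; simp,
        Matrix.det_updateCol_smul]
       simp [smul_eq_mul])

@[simp] theorem wMap_apply {b c r : ℕ} {B : Matrix (Fin b) (Fin c) ℤ}
    (Z' : Module.Basis (Fin (r + 1)) ℤ (LinearMap.ker B.mulVecLin))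
    (cols : Fin r → LinearMap.ker B.mulVecLin) (z : LinearMap.ker B.mulVecLin) :
    wMap Z' cols z = detCoord Z' cols z := rfl



/-- `λ ∘ λ = k · Σ_I w(C_I)²`, where `λ = Σ_I w(C_I) • C_I` is the standard harmonic
cycle, `k = det([∂]_Z [∂]_Zᵀ)` is the tree number, and the sum ranges over all
`(n+1)`-element subsets `I` of `Fin c`. -/
theorem harmonic_cycle_norm_eq_treeNumber_mul_sum_sq_winding
    -- chain complex of free abelian groups around degree i
    (a b c d : ℕ) (ha : 0 < a) (hb : 0 < b) (hc : 0 < c) (hd : 0 < d)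
    (Bm : Matrix (Fin a) (Fin b) ℤ) (B : Matrix (Fin b) (Fin c) ℤ)
    (Bp : Matrix (Fin c) (Fin d) ℤ)
    (h1 : Bm * B = 0) (h2 : B * Bp = 0)
    -- `Z` is a ℤ-basis of `Z₁ = ker ∂₋`, of rank n, and `D = [∂]_Z` is the matrix of
    -- coordinates of the columns of `∂` in the basis `Z`
    (n : ℕ) (Z : Module.Basis (Fin n) ℤ (LinearMap.ker Bm.mulVecLin))
    (D : Matrix (Fin n) (Fin c) ℤ)
    (hD : ∀ j i, B i j = ∑ l, D l j * (Z l : Fin b → ℤ) i)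
    -- `rk H̃_{i−1}(X) = 0` and `rk H̃_i(X) = 1`
    (hrkB : (B.map (Int.cast : ℤ → ℚ)).rank = n)
    (hker : Module.finrank ℚ (LinearMap.ker (B.map (Int.cast : ℤ → ℚ)).mulVecLin)
      = (Bp.map (Int.cast : ℤ → ℚ)).rank + 1)
    -- `Z'` is a ℤ-basis of `Z₂ = ker ∂`, of rank r + 1
    (r : ℕ) (Z' : Module.Basis (Fin (r + 1)) ℤ (LinearMap.ker B.mulVecLin))
    -- `J` picks r columns of `∂₊` whose ℚ-span is the full column space of `∂₊`;
    -- `Jcol` are these columns as elements of `Z₂`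
    (J : Fin r → Fin d) (hJinj : Function.Injective J)
    (Jcol : Fin r → LinearMap.ker B.mulVecLin)
    (hJcol : ∀ t, (Jcol t : Fin c → ℤ) = fun i => Bp i (J t))
    (hJspan : Submodule.span ℚ (Set.range fun t => fun i => (Bp i (J t) : ℚ))
      = Submodule.span ℚ (Set.range fun j => fun i => (Bp i j : ℚ)))
    -- the cycles `C_I` as elements of `Z₂`
    (CI : Finset (Fin c) → LinearMap.ker B.mulVecLin)
    (hCI : ∀ I, (CI I : Fin c → ℤ) = cyc D I)
     :
    (∑ I ∈ Finset.powersetCard (n + 1) (Finset.univ : Finset (Fin c)),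
        detCoord Z' Jcol (CI I) • cyc D I) ⬝ᵥ
      (∑ I ∈ Finset.powersetCard (n + 1) (Finset.univ : Finset (Fin c)),
        detCoord Z' Jcol (CI I) • cyc D I)
      = (D * Dᵀ).det *
        ∑ I ∈ Finset.powersetCard (n + 1) (Finset.univ : Finset (Fin c)),
          (detCoord Z' Jcol (CI I)) ^ 2 := by
  
  classical
  set pc := Finset.powersetCard (n + 1) (Finset.univ : Finset (Fin c)) with hpc
  have inner : ∀ I ∈ pc, ∑ I' ∈ pc, detCoord Z' Jcol (CI I') * (cyc D I ⬝ᵥ cyc D I')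
      = (D * Dᵀ).det * detCoord Z' Jcol (CI I) := by
    intro I hI
    have hIc : I.card = n + 1 := (Finset.mem_powersetCard.mp hI).2
    have hz : D.mulVec (cyc D I) = 0 := by
      funext l
      rw [Matrix.mulVec, Pi.zero_apply, dotProduct_comm]
      exact cyc_dot_row D hIc l
    have hvec : ∑ I' ∈ pc, (cyc D I ⬝ᵥ cyc D I') • CI I' = (D * Dᵀ).det • CI I := by
      apply Subtype.ext
      have hcoe : ((∑ I' ∈ pc, (cyc D I ⬝ᵥ cyc D I') • CI I' :
            LinearMap.ker B.mulVecLin) : Fin c → ℤ)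
          = ∑ I' ∈ pc, (cyc D I ⬝ᵥ cyc D I') • (CI I' : Fin c → ℤ) := by
        push_cast
        rfl
      rw [hcoe]
      funext e
      simp only [Finset.sum_apply, Pi.smul_apply, smul_eq_mul, hCI, SetLike.val_smul]
      have hks := key_sum D hz e
      rw [← hks]
      refine Finset.sum_congr rfl fun I' _ => ?_
      rw [dotProduct_comm]
    have happ := congrArg (wMap Z' Jcol) hvec
    simp only [map_sum, _root_.map_smul, wMap_apply, smul_eq_mul] at happ
    rw [← happ]
    refine Finset.sum_congr rfl fun I' _ => ?_
    ring
  have expand : (∑ I ∈ pc, detCoord Z' Jcol (CI I) • cyc D I) ⬝ᵥ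
      (∑ I ∈ pc, detCoord Z' Jcol (CI I) • cyc D I)
      = ∑ I ∈ pc, ∑ I' ∈ pc, detCoord Z' Jcol (CI I) *
          (detCoord Z' Jcol (CI I') * (cyc D I ⬝ᵥ cyc D I')) := by
    rw [dotProduct]
    simp only [Finset.sum_apply, Pi.smul_apply, smul_eq_mul]
    simp_rw [Finset.sum_mul_sum]
    rw [Finset.sum_comm]
    refine Finset.sum_congr rfl fun I _ => ?_
    rw [Finset.sum_comm]
    refine Finset.sum_congr rfl fun I' _ => ?_
    rw [dotProduct, Finset.mul_sum, Finset.mul_sum]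
    refine Finset.sum_congr rfl fun e _ => ?_
    ring
  rw [expand]
  have hmain : ∀ I ∈ pc,
      ∑ I' ∈ pc, detCoord Z' Jcol (CI I)
          * (detCoord Z' Jcol (CI I') * (cyc D I ⬝ᵥ cyc D I'))
      = detCoord Z' Jcol (CI I) * ((D * Dᵀ).det * detCoord Z' Jcol (CI I)) := by
    intro I hI
    rw [← Finset.mul_sum, inner I hI]
  rw [Finset.sum_congr rfl hmain, Finset.mul_sum]
  refine Finset.sum_congr rfl fun I _ => ?_
  ring
end
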